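/- arXiv:2407.11328 — 7 statements merged into one kernel-verified Lean document; each statement's English description precedes it below -/
import Mathlib

section
/- Let X₁ and X₂ be degree-similar finite simple graphs and let d be a natural number. For i ∈ {1,2} let Vᵢ = {w ∈ V(Xᵢ) : deg_{Xᵢ}(w) = d}. Then the induced subgraphs X₁[V₁] and X₂[V₂] are adjacency cospectral, i.e., the characteristic polynomials of the adjacency matrices A(X₁[V₁]) and A(X₂[V₂]) are equal. -/
open Matrix

open Classical in
noncomputable def adjMat {V : Type*} (G : SimpleGraph V) : Matrix V V ℝ :=
  Matrix.of fun a b => if G.Adj a b then 1 else 0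

noncomputable def gdeg {V : Type*} (G : SimpleGraph V) (v : V) : ℕ :=
  Nat.card (G.neighborSet v)

noncomputable def degMat {V : Type*} [DecidableEq V] (G : SimpleGraph V) : Matrix V V ℝ :=
  Matrix.diagonal fun v => (gdeg G v : ℝ)

/-- Two graphs (on possibly different vertex types of the same cardinality) are
degree similar if there is an invertible real matrix conjugating the adjacency
matrix of the first to that of the second, and likewise for the degree matrices. -/
def DegreeSimilar {V W : Type*} [Fintype V] [Fintype W] [DecidableEq V] [DecidableEq W]
    (G : SimpleGraph V) (H : SimpleGraph W) : Prop :=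
  ∃ (e : V ≃ W) (M : Matrix V V ℝ), IsUnit M ∧
    M⁻¹ * adjMat G * M = (adjMat H).submatrix ⇑e ⇑e ∧
    M⁻¹ * degMat G * M = (degMat H).submatrix ⇑e ⇑e

open Polynomial in
/-- Similar matrices have the same characteristic polynomial. -/
lemma my_charpoly_conj {n : Type*} [Fintype n] [DecidableEq n] (M A : Matrix n n ℝ)
    (hM : IsUnit M) : (M⁻¹ * A * M).charpoly = A.charpoly := by
  have hdet : IsUnit M.det := (isUnit_iff_isUnit_det M).1 hM
  have h1 : M⁻¹ * M = 1 := nonsing_inv_mul M hdet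
  have key : charmatrix (M⁻¹ * A * M) = (M⁻¹).map C * charmatrix A * M.map C := by
    simp only [charmatrix, RingHom.mapMatrix_apply, mul_sub, sub_mul,
      ← Matrix.map_mul]
    congr 1
    have hc : (M⁻¹).map (C : ℝ →+* ℝ[X]) * Matrix.scalar n (X : ℝ[X])
        = Matrix.scalar n (X : ℝ[X]) * (M⁻¹).map C :=
      (Matrix.scalar_commute (X : ℝ[X]) (fun r => Commute.all _ _) _).symm
    rw [hc, mul_assoc, ← Matrix.map_mul, h1, Matrix.map_one _ (map_zero C) (map_one C), mul_one]
  rw [Matrix.charpoly, key, det_mul, det_mul, Matrix.charpoly]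
  have h2 : ((M⁻¹).map (C : ℝ →+* ℝ[X])).det * (charmatrix A).det * (M.map C).det
      = (charmatrix A).det * ((M⁻¹).map C * M.map C).det := by rw [det_mul]; ring
  rw [h2, ← Matrix.map_mul, h1, Matrix.map_one _ (map_zero C) (map_one C), det_one, mul_one]

open Classical in
/-- The diagonal 0/1 projection matrix onto a set of indices. -/
noncomputable def projMat {V : Type*} [DecidableEq V] (S : Set V) : Matrix V V ℝ :=
  Matrix.diagonal (fun v => if v ∈ S then 1 else 0)

open Polynomial Classical in
/-- Compressing a matrix by the diagonal 0/1 projection onto a set `S` of indices yields a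
matrix whose characteristic polynomial is that of the principal submatrix on `S` times a
power of `X`. -/
lemma proj_charpoly {V : Type*} [Fintype V] [DecidableEq V] (A : Matrix V V ℝ) (S : Set V) :
    (projMat S * A * projMat S).charpoly
    = (A.submatrix (Subtype.val : S → V) Subtype.val).charpoly
        * X ^ (Fintype.card {v // ¬ v ∈ S}) := by
  set e := Equiv.sumCompl (fun v => v ∈ S) with he
  have hre : reindex e.symm e.symm (projMat S * A * projMat S)
      = fromBlocks (A.submatrix (Subtype.val : S → V) Subtype.val) 0 0 0 := by
    ext i j
    rcases i with a | a <;> rcases j with b | b <;>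
      simp [projMat, he, Matrix.diagonal_mul, Matrix.mul_diagonal, fromBlocks, a.2, b.2]
  have hz : (0 : Matrix {v // ¬ v ∈ S} {v // ¬ v ∈ S} ℝ).charpoly
      = X ^ (Fintype.card {v // ¬ v ∈ S}) := by
    have hc : charmatrix (0 : Matrix {v // ¬ v ∈ S} {v // ¬ v ∈ S} ℝ)
        = Matrix.diagonal (fun _ => (X : ℝ[X])) := by
      ext i j
      by_cases hij : i = j
      · subst hij; simp
      · simp [hij, Matrix.diagonal_apply_ne _ hij]
    rw [Matrix.charpoly, hc, det_diagonal, Finset.prod_const, Finset.card_univ]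
  calc (projMat S * A * projMat S).charpoly
      = (reindex e.symm e.symm (projMat S * A * projMat S)).charpoly :=
        (Matrix.charpoly_reindex _ _).symm
    _ = (fromBlocks (A.submatrix (Subtype.val : S → V) Subtype.val) 0 0 0).charpoly := by
        rw [hre]
    _ = _ := by rw [Matrix.charpoly_fromBlocks_zero₂₁, hz]

open Classical in
lemma adjMat_induce {V : Type*} (G : SimpleGraph V) (S : Set V) :
    adjMat (G.induce S) = (adjMat G).submatrix (Subtype.val : S → V) Subtype.val := by
  ext a b
  simp only [adjMat, Matrix.of_apply, Matrix.submatrix_apply]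
  by_cases h : G.Adj ↑a ↑b
  · rw [if_pos h, if_pos (by exact h)]
  · rw [if_neg h, if_neg (by exact h)]

/-- The characteristic polynomial does not depend on the choice of instances. -/
lemma charpoly_irrel {α : Type*} (i1 i2 : Fintype α) (d1 d2 : DecidableEq α)
    (A : Matrix α α ℝ) :
    @Matrix.charpoly ℝ _ α d1 i1 A = @Matrix.charpoly ℝ _ α d2 i2 A := by
  have h1 : i1 = i2 := Subsingleton.elim _ _
  have h2 : d1 = d2 := by
    funext a b
    exact Subsingleton.elim _ _
  cases h1; cases h2; rfl

set_option maxHeartbeats 1000000 in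
open Classical in
/-- If `X₁` and `X₂` are degree-similar graphs and `d` is a natural number, then the
induced subgraphs on the sets of vertices of degree `d` are adjacency cospectral. -/
theorem degreeSimilar_induce_charpoly {V : Type*} [Fintype V] [DecidableEq V]
    (X₁ X₂ : SimpleGraph V) (h : DegreeSimilar X₁ X₂) (d : ℕ) :
    Matrix.charpoly (adjMat (X₁.induce {w | gdeg X₁ w = d}))
      = Matrix.charpoly (adjMat (X₂.induce {w | gdeg X₂ w = d})) := by
  obtain ⟨e, M, hM, hA, hD⟩ := h
  have hdet : IsUnit M.det := (isUnit_iff_isUnit_det M).1 hM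
  have hinv : M⁻¹ * M = 1 := nonsing_inv_mul M hdet
  have hinv' : M * M⁻¹ = 1 := mul_nonsing_inv M hdet
  have cancel : ∀ B : Matrix V V ℝ, M * (M⁻¹ * B) = B := fun B => by
    rw [← mul_assoc, hinv', one_mul]
  have cancel' : ∀ B : Matrix V V ℝ, M⁻¹ * (M * B) = B := fun B => by
    rw [← mul_assoc, hinv, one_mul]
  set S₁ : Set V := {w | gdeg X₁ w = d} with hS₁
  set S₂ : Set V := {w | gdeg X₂ w = d} with hS₂
  clear_value S₁ S₂
  -- the degree matrices give a block structure to M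
  have hDM : degMat X₁ * M = M * (degMat X₂).submatrix ⇑e ⇑e := by
    have := congrArg (fun B => M * B) hD
    simpa only [← mul_assoc, hinv', one_mul] using this
  have hsubdiag : (degMat X₂).submatrix ⇑e ⇑e
      = Matrix.diagonal (fun v => ((gdeg X₂ (e v) : ℝ))) := by
    ext u v
    by_cases huv : u = v
    · subst huv; simp [degMat]
    · have : e u ≠ e v := fun hc => huv (e.injective hc)
      simp [degMat, Matrix.diagonal_apply_ne _ huv, Matrix.diagonal_apply_ne _ this]
  have hentry : ∀ u v, (gdeg X₁ u : ℝ) * M u v = M u v * (gdeg X₂ (e v) : ℝ) := by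
    intro u v
    have h1 := congrFun (congrFun hDM u) v
    rw [hsubdiag] at h1
    simpa [degMat, Matrix.diagonal_mul, Matrix.mul_diagonal] using h1
  have hPM : projMat S₁ * M = M * (projMat S₂).submatrix ⇑e ⇑e := by
    have hsubP : (projMat S₂).submatrix ⇑e ⇑e
        = Matrix.diagonal (fun v => if e v ∈ S₂ then (1:ℝ) else 0) := by
      ext u v
      by_cases huv : u = v
      · subst huv; simp [projMat]
      · have hne : e u ≠ e v := fun hc => huv (e.injective hc)
        simp [projMat, Matrix.diagonal_apply_ne _ huv, Matrix.diagonal_apply_ne _ hne]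
    rw [hsubP]
    simp only [projMat]
    ext u v
    rw [Matrix.diagonal_mul, Matrix.mul_diagonal]
    by_cases hz : M u v = 0
    · simp [hz]
    · have hdeg : gdeg X₁ u = gdeg X₂ (e v) := by
        have := hentry u v
        rw [mul_comm (M u v) _] at this
        exact_mod_cast mul_right_cancel₀ hz this
      have hiff : (u ∈ S₁) ↔ (e v ∈ S₂) := by
        simp only [hS₁, hS₂, Set.mem_setOf_eq, hdeg]
      by_cases hu : u ∈ S₁
      · rw [if_pos hu, if_pos (hiff.1 hu), one_mul, mul_one]
      · rw [if_neg hu, if_neg (fun hc => hu (hiff.2 hc)), zero_mul, mul_zero]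
  have hPc : M⁻¹ * projMat S₁ * M = (projMat S₂).submatrix ⇑e ⇑e := by
    rw [mul_assoc, hPM, cancel']
  -- conjugating the compressed matrix
  have hconj : M⁻¹ * (projMat S₁ * adjMat X₁ * projMat S₁) * M
      = (projMat S₂ * adjMat X₂ * projMat S₂).submatrix ⇑e ⇑e := by
    have expand : M⁻¹ * (projMat S₁ * adjMat X₁ * projMat S₁) * M
        = (M⁻¹ * projMat S₁ * M) * (M⁻¹ * adjMat X₁ * M) * (M⁻¹ * projMat S₁ * M) := by
      simp only [Matrix.mul_assoc, cancel]
    rw [expand, hPc, hA, Matrix.submatrix_mul_equiv, Matrix.submatrix_mul_equiv]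
  -- charpoly equality of the compressed matrices
  have hcp : (projMat S₁ * adjMat X₁ * projMat S₁).charpoly
      = (projMat S₂ * adjMat X₂ * projMat S₂).charpoly := by
    have h1 := my_charpoly_conj M (projMat S₁ * adjMat X₁ * projMat S₁) hM
    rw [hconj] at h1
    have h2 : ((projMat S₂ * adjMat X₂ * projMat S₂).submatrix ⇑e ⇑e).charpoly
        = (projMat S₂ * adjMat X₂ * projMat S₂).charpoly := by
      have := Matrix.charpoly_reindex (R := ℝ) e.symm
        (projMat S₂ * adjMat X₂ * projMat S₂)
      simpa [Matrix.reindex_apply] using this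
    rw [h2] at h1
    exact h1.symm
  -- cardinalities agree
  have htr : Matrix.trace (projMat S₁) = Matrix.trace (projMat S₂) := by
    have t1 : Matrix.trace (M⁻¹ * projMat S₁ * M) = Matrix.trace (projMat S₁) := by
      rw [Matrix.trace_mul_comm, ← mul_assoc, hinv', one_mul]
    have t2 : Matrix.trace ((projMat S₂).submatrix ⇑e ⇑e)
        = Matrix.trace (projMat S₂) := by
      simp only [Matrix.trace, Matrix.diag, Matrix.submatrix_apply]
      exact Equiv.sum_comp e (fun w => projMat S₂ w w)
    rw [← t1, hPc, t2]
  have hc1 : Matrix.trace (projMat S₁) = (Fintype.card S₁ : ℝ) := by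
    simp only [projMat, Matrix.trace_diagonal]
    rw [Fintype.card_subtype]
    simp [Finset.sum_boole]
  have hc2 : Matrix.trace (projMat S₂) = (Fintype.card S₂ : ℝ) := by
    simp only [projMat, Matrix.trace_diagonal]
    rw [Fintype.card_subtype]
    simp [Finset.sum_boole]
  have hcard : Fintype.card S₁ = Fintype.card S₂ := by
    have hq := htr
    rw [hc1, hc2] at hq
    exact_mod_cast hq
  have hcardc : Fintype.card {v // ¬ v ∈ S₁} = Fintype.card {v // ¬ v ∈ S₂} := by
    rw [Fintype.card_subtype_compl, Fintype.card_subtype_compl, hcard]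
  -- put everything together
  have key1 := proj_charpoly (adjMat X₁) S₁
  have key2 := proj_charpoly (adjMat X₂) S₂
  have main : ((adjMat X₁).submatrix (Subtype.val : S₁ → V) Subtype.val).charpoly
      = ((adjMat X₂).submatrix (Subtype.val : S₂ → V) Subtype.val).charpoly := by
    have trans := key1.symm.trans (hcp.trans key2)
    rw [hcardc] at trans
    exact mul_right_cancel₀ (pow_ne_zero _ Polynomial.X_ne_zero) trans
  subst hS₁ hS₂
  rw [adjMat_induce X₁ _, adjMat_induce X₂ _]
  exact (charpoly_irrel _ _ _ _ _).trans (main.trans (charpoly_irrel _ _ _ _ _))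
end

section
/- Let X and Y be finite simple graphs on n vertices with X connected, and let M be an invertible real n×n matrix such that M⁻¹A(X)M = A(Y) and M⁻¹D(X)M = D(Y). Then M⁻¹J_nM = J_n, where J_n is the n×n all-ones matrix. -/
open Matrix

open Classical in
lemma adjMat_eq {V : Type*} [Fintype V] (G : SimpleGraph V) [DecidableRel G.Adj] :
    adjMat G = G.adjMatrix ℝ := by
  ext a b; simp [adjMat, SimpleGraph.adjMatrix]

lemma degMat_eq {V : Type*} [Fintype V] [DecidableEq V] (G : SimpleGraph V)
    [DecidableRel G.Adj] : degMat G = G.degMatrix ℝ := by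
  have h : ∀ v, (gdeg G v : ℝ) = (G.degree v : ℝ) := by
    intro v
    rw [gdeg, Nat.card_eq_fintype_card, SimpleGraph.card_neighborSet_eq_degree]
  unfold degMat SimpleGraph.degMatrix
  simp_rw [h]

lemma lapMat_eq {V : Type*} [Fintype V] [DecidableEq V] (G : SimpleGraph V)
    [DecidableRel G.Adj] : degMat G - adjMat G = G.lapMatrix ℝ := by
  rw [adjMat_eq, degMat_eq, SimpleGraph.lapMatrix]

/-- If `X` is connected and `M` conjugates `A(X), D(X)` to `A(Y), D(Y)`, then `M`
also conjugates the all-ones matrix to itself. -/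
theorem conj_allOnes {V : Type*} [Fintype V] [DecidableEq V]
    (X Y : SimpleGraph V) (hX : X.Connected) (M : Matrix V V ℝ) (hM : IsUnit M)
    (hA : M⁻¹ * adjMat X * M = adjMat Y) (hD : M⁻¹ * degMat X * M = degMat Y) :
    M⁻¹ * (Matrix.of fun _ _ => (1 : ℝ)) * M = Matrix.of fun _ _ => (1 : ℝ) := by
  classical
  have hdet : IsUnit M.det := (Matrix.isUnit_iff_isUnit_det M).mp hM
  have hMinv : M * M⁻¹ = 1 := Matrix.mul_nonsing_inv M hdet
  have hinvM : M⁻¹ * M = 1 := Matrix.nonsing_inv_mul M hdet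
  set LX := X.lapMatrix ℝ with hLX
  set LY := Y.lapMatrix ℝ with hLY
  set u : V → ℝ := fun _ => 1 with hu
  have hMinj : Function.Injective (M.mulVec) := Matrix.mulVec_injective_iff_isUnit.mpr hM
  -- conjugation for Laplacians
  have hLconj : LX * M = M * LY := by
    have : M⁻¹ * (degMat X - adjMat X) * M = degMat Y - adjMat Y := by
      rw [Matrix.mul_sub, Matrix.sub_mul, hA, hD]
    rw [lapMat_eq, lapMat_eq] at this
    calc LX * M = M * (M⁻¹ * LX * M) := by
          rw [← Matrix.mul_assoc, ← Matrix.mul_assoc, hMinv, Matrix.one_mul]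
      _ = M * LY := by rw [this]
  -- kernel of LX is constants
  have hker : ∀ v : V → ℝ, LX *ᵥ v = 0 → ∃ c : ℝ, v = c • u := by
    intro v hv
    have h := (X.lapMatrix_mulVec_eq_zero_iff_forall_reachable (x := v)).mp hv
    obtain ⟨i₀⟩ := hX.nonempty
    exact ⟨v i₀, funext fun j => by
      simpa [hu] using h j i₀ (hX.preconnected j i₀)⟩
  -- key: kernel vectors of LY map to constants
  have hkey : ∀ v : V → ℝ, LY *ᵥ v = 0 → ∃ c : ℝ, M *ᵥ v = c • u := by
    intro v hv
    apply hker
    rw [Matrix.mulVec_mulVec, hLconj, ← Matrix.mulVec_mulVec, hv, Matrix.mulVec_zero]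
  have hLYu : LY *ᵥ u = 0 := Y.lapMatrix_mulVec_const_eq_zero
  have hLXu : LX *ᵥ u = 0 := X.lapMatrix_mulVec_const_eq_zero
  obtain ⟨c, hc⟩ := hkey u hLYu
  have hune : u ≠ 0 := by
    obtain ⟨i₀⟩ := hX.nonempty
    intro h; exact one_ne_zero (congrFun h i₀)
  have hc0 : c ≠ 0 := by
    rintro rfl
    apply hune
    apply hMinj
    simp [hc]
  -- transpose: Mᵀ *ᵥ u is in kernel of LY
  have hsymX : LXᵀ = LX := X.isSymm_lapMatrix ℝ
  have hsymY : LYᵀ = LY := Y.isSymm_lapMatrix ℝ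
  have hLconjT : Mᵀ * LX = LY * Mᵀ := by
    have := congrArg Matrix.transpose hLconj
    rw [Matrix.transpose_mul, Matrix.transpose_mul, hsymX, hsymY] at this
    exact this
  have hMTu : LY *ᵥ (Mᵀ *ᵥ u) = 0 := by
    rw [Matrix.mulVec_mulVec, ← hLconjT, ← Matrix.mulVec_mulVec, hLXu, Matrix.mulVec_zero]
  obtain ⟨c', hc'⟩ := hkey _ hMTu
  have hMTu' : Mᵀ *ᵥ u = (c' / c) • u := by
    apply hMinj
    rw [hc', Matrix.mulVec_smul, hc, smul_smul, div_mul_cancel₀ _ hc0]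
  -- c' / c = c
  have hn : (0 : ℝ) < Fintype.card V := by
    exact_mod_cast Fintype.card_pos_iff.mpr hX.nonempty
  have hcd : c' / c = c := by
    have h1 : u ⬝ᵥ (M *ᵥ u) = c * Fintype.card V := by
      rw [hc]; simp [dotProduct, hu, Finset.mul_sum, mul_comm]
    have h2 : u ⬝ᵥ (M *ᵥ u) = (c' / c) * Fintype.card V := by
      rw [Matrix.dotProduct_mulVec, ← Matrix.mulVec_transpose, hMTu']
      simp [dotProduct, hu, Finset.mul_sum]
      ring
    exact mul_right_cancel₀ (ne_of_gt hn) (h2.symm.trans h1)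
  -- finish
  have hrow : ∀ j, (∑ k, M k j) = c := by
    intro j
    have := congrFun hMTu' j
    simpa [Matrix.mulVec, dotProduct, hu, hcd] using this
  have hcol : ∀ i, (∑ k, M i k) = c := by
    intro i
    have := congrFun hc i
    simpa [Matrix.mulVec, dotProduct, hu] using this
  have hJM : (Matrix.of fun _ => u) * M = M * (Matrix.of fun _ => u) := by
    ext i j
    simp [Matrix.mul_apply, hu, hrow j, hcol i]
  show M⁻¹ * (Matrix.of fun _ => u) * M = Matrix.of fun _ => u
  rw [Matrix.mul_assoc, hJM, ← Matrix.mul_assoc, hinvM, Matrix.one_mul]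
end

section
/- Two finite trees (connected acyclic finite simple graphs) are degree similar if and only if they are isomorphic. -/
open Matrix

set_option maxHeartbeats 1600000

set_option linter.unusedSectionVars false

section Helpers
variable {V : Type*} [Fintype V] (G : SimpleGraph V)

lemma gdeg_eq_ncard (v : V) : gdeg G v = Set.ncard {w | G.Adj v w} := by
  rw [gdeg, ← Nat.card_coe_set_eq]
  rfl

open Classical in
lemma sum_ite_eq_ncard (P : V → Prop) :
    (∑ l : V, if P l then (1 : ℝ) else 0) = (Set.ncard {l | P l} : ℝ) := by
  classical
  rw [Finset.sum_boole, Set.ncard_eq_toFinset_card']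
  congr 2
  simp [Set.toFinset_setOf]

lemma exists_adj_of_card_ge_two (hc : G.Connected) (h2 : 2 ≤ Fintype.card V) (v : V) :
    ∃ w, G.Adj v w := by
  obtain ⟨w, hw⟩ := Fintype.exists_ne_of_one_lt_card (by omega) v
  obtain ⟨p⟩ := hc v w
  cases p with
  | nil => exact absurd rfl hw.symm
  | cons h _ => exact ⟨_, h⟩

lemma gdeg_pos_of_card_ge_two (hc : G.Connected) (h2 : 2 ≤ Fintype.card V) (v : V) :
    1 ≤ gdeg G v := by
  obtain ⟨w, hw⟩ := exists_adj_of_card_ge_two G hc h2 v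
  rw [gdeg_eq_ncard]
  exact (Set.ncard_pos (Set.toFinite _)).mpr ⟨w, hw⟩

/-- the unique neighbor of a leaf -/
lemma leaf_unique_nbr {l : V} (hl : gdeg G l = 1) : ∃ a, ∀ w, G.Adj l w ↔ w = a := by
  rw [gdeg_eq_ncard] at hl
  obtain ⟨a, ha⟩ := Set.ncard_eq_one.mp hl
  refine ⟨a, fun w => ⟨fun hw => ?_, fun hw => ?_⟩⟩
  · have : w ∈ {x | G.Adj l x} := hw
    rwa [ha] at this
  · subst hw
    have : w ∈ ({w} : Set V) := rfl
    rwa [← ha] at this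

lemma reachable_closed {S : Set V} (hS : ∀ x ∈ S, ∀ y, G.Adj x y → y ∈ S) {u v : V}
    (p : G.Walk u v) (hu : u ∈ S) : v ∈ S := by
  induction p with
  | nil => exact hu
  | cons h p ih => exact ih (hS _ hu _ h)

lemma card_le_two_of_leaf_adj_leaf (hc : G.Connected) {l m : V} (hl : gdeg G l = 1)
    (hm : gdeg G m = 1) (hadj : G.Adj l m) : Fintype.card V ≤ 2 := by
  classical
  obtain ⟨a, ha⟩ := leaf_unique_nbr G hl
  obtain ⟨b, hb⟩ := leaf_unique_nbr G hm
  have ham : a = m := ((ha m).mp hadj).symm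
  have hbl : b = l := ((hb l).mp hadj.symm).symm
  have hclosed : ∀ x ∈ ({l, m} : Set V), ∀ y, G.Adj x y → y ∈ ({l, m} : Set V) := by
    rintro x (rfl | rfl) y hxy
    · right
      have := (ha y).mp hxy
      rw [ham] at this
      exact this
    · left
      have := (hb y).mp hxy
      rw [hbl] at this
      exact this
  have hall : ∀ v : V, v ∈ ({l, m} : Set V) := by
    intro v
    obtain ⟨p⟩ := hc l v
    exact reachable_closed G hclosed p (by left; rfl)
  have hsub : (Finset.univ : Finset V) ⊆ {l, m} := by
    intro v _
    have := hall v
    simp only [Set.mem_insert_iff, Set.mem_singleton_iff] at this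
    rcases this with rfl | rfl <;> simp
  calc Fintype.card V = Finset.univ.card := rfl
    _ ≤ ({l, m} : Finset V).card := Finset.card_le_card hsub
    _ ≤ 2 := (Finset.card_insert_le _ _).trans (by simp)

lemma gdeg_eq_degree [DecidableEq V] [DecidableRel G.Adj] (v : V) : gdeg G v = G.degree v := by
  rw [gdeg, Nat.card_eq_fintype_card]
  exact SimpleGraph.card_neighborSet_eq_degree G v

lemma sum_gdeg (hT : G.IsTree) : ∑ v : V, gdeg G v = 2 * (Fintype.card V - 1) := by
  classical
  have h1 := SimpleGraph.sum_degrees_eq_twice_card_edges G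
  have h2 := hT.card_edgeFinset
  have h3 : ∀ v, gdeg G v = G.degree v := gdeg_eq_degree G
  rw [Finset.sum_congr rfl fun v _ => h3 v, h1]
  omega

lemma exists_leaf (hT : G.IsTree) (h2 : 2 ≤ Fintype.card V) : ∃ v, gdeg G v = 1 := by
  by_contra h
  push_neg at h
  have hge : ∀ v, 2 ≤ gdeg G v := by
    intro v
    have h1 := gdeg_pos_of_card_ge_two G hT.1 h2 v
    have := h v
    omega
  have hsum : ∑ _v : V, 2 ≤ ∑ v : V, gdeg G v := Finset.sum_le_sum (fun v _ => hge v)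
  rw [sum_gdeg G hT] at hsum
  simp only [Finset.sum_const, Finset.card_univ, smul_eq_mul] at hsum
  omega

end Helpers

section Pruned
variable {V : Type*} [Fintype V] (G : SimpleGraph V)

lemma two_le_gdeg_interior {u v w : V} (p : G.Walk u v) (hp : p.IsPath) (hw : w ∈ p.support)
    (hwu : w ≠ u) (hwv : w ≠ v) : 2 ≤ gdeg G w := by
  induction p with
  | nil =>
    simp only [SimpleGraph.Walk.support_nil, List.mem_singleton] at hw
    exact absurd hw hwu
  | @cons a x v h q ih =>
    simp only [SimpleGraph.Walk.support_cons, List.mem_cons] at hw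
    rcases hw with rfl | hw
    · exact absurd rfl hwu
    · by_cases hwx : w = x
      · subst hwx
        cases q with
        | nil => exact absurd rfl hwv
        | @cons x y v h2 r =>
          have hnodup := hp.2
          simp only [SimpleGraph.Walk.support_cons, List.nodup_cons] at hnodup
          have hay : a ≠ y := by
            rintro rfl
            exact hnodup.1 (by
              simp only [SimpleGraph.Walk.support_cons, List.mem_cons]
              right
              exact SimpleGraph.Walk.start_mem_support r)
          rw [gdeg_eq_ncard]
          have h1 : 1 < Set.ncard {z | G.Adj w z} := by
            rw [Set.one_lt_ncard (Set.toFinite _)]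
            exact ⟨a, h.symm, y, h2, hay⟩
          omega
      · exact ih hp.of_cons hw hwx hwv

lemma reachable_induce {s : Set V} {u v : V} (p : G.Walk u v) (hsup : ∀ w ∈ p.support, w ∈ s)
    (hu : u ∈ s) (hv : v ∈ s) : (G.induce s).Reachable ⟨u, hu⟩ ⟨v, hv⟩ := by
  induction p with
  | nil => rfl
  | @cons a x b h q ih =>
    have hx : x ∈ s := hsup x (by simp [SimpleGraph.Walk.support_cons,
      SimpleGraph.Walk.start_mem_support])
    have step : (G.induce s).Adj ⟨a, hu⟩ ⟨x, hx⟩ := by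
      simp only [SimpleGraph.comap_adj, Function.Embedding.coe_subtype]
      exact h
    exact (SimpleGraph.Adj.reachable step).trans
      (ih (fun w hw => hsup w (by simp [SimpleGraph.Walk.support_cons, hw])) hx hv)

lemma induce_acyclic {s : Set V} (h : G.IsAcyclic) : (G.induce s).IsAcyclic := by
  intro v c hc
  have := SimpleGraph.Walk.map_isCycle_iff_of_injective
    (f := SimpleGraph.Embedding.induce s |>.toHom) (p := c) Subtype.val_injective
  exact h _ (this.mpr hc)

lemma anchor_internal (hT : G.IsTree) (h3 : 3 ≤ Fintype.card V) {l a : V} (hl : gdeg G l = 1)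
    (ha : ∀ w, G.Adj l w ↔ w = a) : gdeg G a ≠ 1 := by
  intro haa
  have := card_le_two_of_leaf_adj_leaf G hT.isConnected hl haa ((ha a).mpr rfl)
  omega

lemma pruned_isTree (hT : G.IsTree) (h3 : 3 ≤ Fintype.card V) :
    (G.induce {v | gdeg G v ≠ 1}).IsTree := by
  classical
  have hne : Nonempty ↥({v | gdeg G v ≠ 1} : Set V) := by
    obtain ⟨l, hl⟩ := exists_leaf G hT (by omega)
    obtain ⟨a, ha⟩ := leaf_unique_nbr G hl
    exact ⟨⟨a, anchor_internal G hT h3 hl ha⟩⟩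
  haveI := hne
  constructor
  · refine ⟨?_⟩
    rintro ⟨u, hu⟩ ⟨v, hv⟩
    have hreach := hT.isConnected u v
    obtain ⟨p0⟩ := hreach
    let P := p0.toPath
    refine reachable_induce G P.1 (fun w hw => ?_) hu hv
    by_cases hwu : w = u
    · subst hwu; exact hu
    by_cases hwv : w = v
    · subst hwv; exact hv
    have := two_le_gdeg_interior G P.1 P.2 hw hwu hwv
    simp only [Set.mem_setOf_eq]
    omega
  · exact induce_acyclic G hT.IsAcyclic

open Classical in
lemma gdeg_split (hu : gdeg G u ≠ 1) :
    gdeg G u = gdeg (G.induce {v | gdeg G v ≠ 1}) ⟨u, hu⟩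
      + Set.ncard {l | G.Adj u l ∧ gdeg G l = 1} := by
  have hqe : gdeg (G.induce {v | gdeg G v ≠ 1}) ⟨u, hu⟩
      = Set.ncard {w | G.Adj u w ∧ gdeg G w ≠ 1} := by
    rw [gdeg, ← Nat.card_coe_set_eq]
    refine Nat.card_congr ?_
    exact {
      toFun := fun x => ⟨x.1.1, x.2, x.1.2⟩
      invFun := fun y => ⟨⟨y.1, y.2.2⟩, y.2.1⟩
      left_inv := fun x => rfl
      right_inv := fun y => rfl }
  rw [hqe, gdeg_eq_ncard]
  have hun : {w | G.Adj u w} = {w | G.Adj u w ∧ gdeg G w ≠ 1} ∪ {l | G.Adj u l ∧ gdeg G l = 1} := by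
    ext w
    simp only [Set.mem_setOf_eq, Set.mem_union]
    tauto
  rw [hun, Set.ncard_union_eq ?_ (Set.toFinite _) (Set.toFinite _)]
  rw [Set.disjoint_left]
  rintro w ⟨-, hw⟩ ⟨-, hw'⟩
  exact hw hw'

end Pruned

section Small
variable {V : Type*} [Fintype V] (G : SimpleGraph V)

lemma adj_iff_ne_of_card_two (hc : G.Connected) (h2 : Fintype.card V = 2) (x y : V) :
    G.Adj x y ↔ x ≠ y := by
  classical
  constructor
  · exact fun h => h.ne
  · intro hxy
    obtain ⟨p⟩ := hc x y
    cases p with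
    | nil => exact absurd rfl hxy
    | @cons a z b h q =>
      by_cases hz : z = y
      · subst hz; exact h
      · exfalso
        have hxz : x ≠ z := h.ne
        have h3 : ({x, z, y} : Finset V).card = 3 := by
          rw [Finset.card_insert_of_notMem (by simp [hxz, hxy]),
            Finset.card_insert_of_notMem (by simp [hz]), Finset.card_singleton]
        have := Finset.card_le_univ ({x, z, y} : Finset V)
        rw [h3] at this
        omega

lemma no_adj_of_card_one (h1 : Fintype.card V = 1) (x y : V) : ¬ G.Adj x y := by
  haveI : Subsingleton V := by
    rw [← Fintype.card_le_one_iff_subsingleton]; omega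
  intro h
  exact h.ne (Subsingleton.elim x y)

end Small

section IsoTransfer
variable {V W : Type*}

lemma isTree_of_iso {G : SimpleGraph V} {H : SimpleGraph W} (e : G ≃g H) (hH : H.IsTree) :
    G.IsTree := by
  constructor
  · exact e.connected_iff.mpr hH.isConnected
  · intro v c hc
    exact hH.IsAcyclic (c.map e.toHom)
      ((SimpleGraph.Walk.map_isCycle_iff_of_injective (e.toEquiv.injective)).mpr hc)

lemma gdeg_iso {G : SimpleGraph V} {H : SimpleGraph W} (e : G ≃g H) (v : V) :
    gdeg G v = gdeg H (e v) :=
  Nat.card_congr (e.mapNeighborSet v)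

lemma gdeg_comap (H : SimpleGraph W) (e : V ≃ W) (a : V) :
    gdeg (H.comap ⇑e) a = gdeg H (e a) := by
  apply Nat.card_congr
  exact {
    toFun := fun x => ⟨e x.1, x.2⟩
    invFun := fun y => ⟨e.symm y.1, by
      have : H.Adj (e a) y.1 := y.2
      simpa [e.apply_symm_apply] using this⟩
    left_inv := fun x => by ext; simp
    right_inv := fun y => by ext; simp }

end IsoTransfer

section MatrixHelpers
variable {V V' : Type*} [Fintype V] [Fintype V'] [DecidableEq V] [DecidableEq V']

lemma card_eq_of_inv (M : Matrix V V' ℝ) (N : Matrix V' V ℝ) (hMN : M * N = 1)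
    (hNM : N * M = 1) : Fintype.card V = Fintype.card V' := by
  have h1 : ((Fintype.card V : ℝ)) = (M * N).trace := by rw [hMN, Matrix.trace_one]
  have h2 : ((Fintype.card V' : ℝ)) = (N * M).trace := by rw [hNM, Matrix.trace_one]
  have := Matrix.trace_mul_comm M N
  rw [← h1, ← h2] at this
  exact_mod_cast this

lemma exists_equiv_ne_zero (M : Matrix V V' ℝ) (N : Matrix V' V ℝ) (hMN : M * N = 1)
    (hNM : N * M = 1) : ∃ φ : V ≃ V', ∀ u, M u (φ u) ≠ 0 := by
  have hcard := card_eq_of_inv M N hMN hNM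
  let e : V ≃ V' := Fintype.equivOfCardEq hcard
  set P : Matrix V V ℝ := M.submatrix id ⇑e with hP
  set Q : Matrix V V ℝ := N.submatrix ⇑e id with hQ
  have hPQ : P * Q = 1 := by
    rw [hP, hQ, Matrix.submatrix_mul_equiv, hMN, Matrix.submatrix_id_id]
  have hdet : P.det ≠ 0 := by
    intro h
    have := Matrix.det_mul P Q
    rw [hPQ, Matrix.det_one, h, zero_mul] at this
    exact one_ne_zero this
  by_contra hno
  push_neg at hno
  apply hdet
  rw [Matrix.det_apply]
  apply Finset.sum_eq_zero
  intro σ _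
  obtain ⟨u, hu⟩ := hno (σ.symm.trans e)
  have hPzero : P (σ (σ.symm u)) (σ.symm u) = 0 := by
    simpa [hP, Matrix.submatrix_apply] using hu
  have : (∏ i : V, P (σ i) i) = 0 :=
    Finset.prod_eq_zero (Finset.mem_univ (σ.symm u)) hPzero
  rw [this, smul_zero]

lemma sum_subtype_eq_sum {p : V → Prop} [Fintype (Subtype p)] (f : V → ℝ)
    (h : ∀ v, ¬ p v → f v = 0) : ∑ v : Subtype p, f ↑v = ∑ v, f v := by
  classical
  rw [← Finset.sum_subtype (Finset.univ.filter p) (by simp) f]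
  exact Finset.sum_filter_of_ne (fun x _ hx => by_contra fun hpx => hx (h x hpx))

end MatrixHelpers

section CI
variable {V : Type*} [Fintype V] [DecidableEq V]

open Classical in
lemma keyOff (G : SimpleGraph V) (Q : V → Prop) (hQ : ∀ l, Q l → gdeg G l = 1)
    (u w : V) (huw : u ≠ w) :
    (adjMat G * Matrix.diagonal (fun l => if Q l then (1:ℝ) else 0) * adjMat G) u w = 0 := by
  rw [Matrix.mul_apply]
  apply Finset.sum_eq_zero
  intro l _
  rw [Matrix.mul_diagonal]
  by_cases h1 : G.Adj u l
  · by_cases h2 : Q l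
    · by_cases h3 : G.Adj l w
      · exfalso
        obtain ⟨a, ha⟩ := leaf_unique_nbr G (hQ l h2)
        have h4 : u = a := (ha u).mp h1.symm
        have h5 : w = a := (ha w).mp h3
        exact huw (h4.trans h5.symm)
      · simp [adjMat, h3]
    · simp [h2]
  · simp [adjMat, h1]

open Classical in
lemma keyDiag (G : SimpleGraph V) (Q : V → Prop) (u : V) :
    (adjMat G * Matrix.diagonal (fun l => if Q l then (1:ℝ) else 0) * adjMat G) u u
      = (Set.ncard {l | G.Adj u l ∧ Q l} : ℝ) := by
  rw [Matrix.mul_apply, ← sum_ite_eq_ncard (fun l => G.Adj u l ∧ Q l)]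
  apply Finset.sum_congr rfl
  intro l _
  rw [Matrix.mul_diagonal]
  by_cases h1 : G.Adj u l
  · by_cases h2 : Q l
    · have h3 : G.Adj l u := h1.symm
      simp [adjMat, h1, h2, h3]
    · simp [adjMat, h1, h2]
  · simp [adjMat, h1]

end CI

section CI2
variable {V V' : Type*} [Fintype V] [Fintype V'] [DecidableEq V] [DecidableEq V']

open Classical in
lemma count_intertwine (T : SimpleGraph V) (T' : SimpleGraph V') (M : Matrix V V' ℝ)
    (hA : adjMat T * M = M * adjMat T')
    (P : V → Prop) (P' : V' → Prop)
    (hPleaf : ∀ l, P l → gdeg T l = 1) (hP'leaf : ∀ l, P' l → gdeg T' l = 1)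
    (hcompat : ∀ u v, M u v ≠ 0 → (P u ↔ P' v)) :
    ∀ u v, M u v ≠ 0 →
      Set.ncard {l | T.Adj u l ∧ P l} = Set.ncard {l' | T'.Adj v l' ∧ P' l'} := by
  set A := adjMat T with hAdef
  set A' := adjMat T' with hA'def
  set DP : Matrix V V ℝ := Matrix.diagonal (fun l => if P l then (1:ℝ) else 0) with hDP
  set DP' : Matrix V' V' ℝ := Matrix.diagonal (fun l => if P' l then (1:ℝ) else 0) with hDP'
  have step1 : DP * M = M * DP' := by
    ext a b
    rw [hDP, hDP', Matrix.diagonal_mul, Matrix.mul_diagonal]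
    by_cases h : M a b = 0
    · simp [h]
    · have hiff := hcompat a b h
      by_cases hp : P a
      · rw [if_pos hp, if_pos (hiff.mp hp), one_mul, mul_one]
      · rw [if_neg hp, if_neg (fun c => hp (hiff.mpr c)), zero_mul, mul_zero]
  have hchain : A * DP * A * M = M * (A' * DP' * A') := by
    calc A * DP * A * M = A * DP * (A * M) := by rw [Matrix.mul_assoc]
      _ = A * DP * (M * A') := by rw [hA]
      _ = A * (DP * M) * A' := by
          rw [← Matrix.mul_assoc, Matrix.mul_assoc A DP M]
      _ = A * (M * DP') * A' := by rw [step1]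
      _ = (A * M) * DP' * A' := by rw [← Matrix.mul_assoc]
      _ = (M * A') * DP' * A' := by rw [hA]
      _ = M * (A' * DP' * A') := by rw [Matrix.mul_assoc, Matrix.mul_assoc, Matrix.mul_assoc]
  intro u v hMuv
  have hL : (A * DP * A * M) u v = (Set.ncard {l | T.Adj u l ∧ P l} : ℝ) * M u v := by
    rw [Matrix.mul_apply]
    rw [Finset.sum_eq_single u]
    · rw [hAdef, hDP, keyDiag T P u]
    · intro w _ hw
      rw [hAdef, hDP, keyOff T P hPleaf u w (Ne.symm hw), zero_mul]
    · intro h; exact absurd (Finset.mem_univ u) h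
  have hR : (M * (A' * DP' * A')) u v = M u v * (Set.ncard {l' | T'.Adj v l' ∧ P' l'} : ℝ) := by
    rw [Matrix.mul_apply]
    rw [Finset.sum_eq_single v]
    · rw [hA'def, hDP', keyDiag T' P' v]
    · intro w _ hw
      rw [hA'def, hDP', keyOff T' P' hP'leaf w v hw, mul_zero]
    · intro h; exact absurd (Finset.mem_univ v) h
  have heq : (Set.ncard {l | T.Adj u l ∧ P l} : ℝ) * M u v
      = M u v * (Set.ncard {l' | T'.Adj v l' ∧ P' l'} : ℝ) := by
    rw [← hL, ← hR, hchain]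
  rw [mul_comm ((Set.ncard {l | T.Adj u l ∧ P l} : ℝ)) (M u v)] at heq
  have hcancel := mul_left_cancel₀ hMuv heq
  exact_mod_cast hcancel
end CI2

universe u w

theorem tree_intertwine (n : ℕ) :
    ∀ (V V' : Type u) [Fintype V] [Fintype V'] [DecidableEq V] [DecidableEq V']
      (T : SimpleGraph V) (T' : SimpleGraph V') (Λ : Type w) (g : V → Λ) (g' : V' → Λ)
      (M : Matrix V V' ℝ) (N : Matrix V' V ℝ),
      Fintype.card V ≤ n → T.IsTree → T'.IsTree → M * N = 1 → N * M = 1 →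
      adjMat T * M = M * adjMat T' →
      (∀ u v, M u v ≠ 0 → g u = g' v) →
      (∀ u v, M u v ≠ 0 → gdeg T u = gdeg T' v) →
      ∃ φ : T ≃g T', ∀ u, g' (φ u) = g u := by
  induction n with
  | zero =>
    intro V V' _ _ _ _ T T' Λ g g' M N hn hT _ _ _ _ _ _
    have : Nonempty V := hT.isConnected.nonempty
    have := Fintype.card_pos_iff.mpr this
    omega
  | succ n ih =>
    intro V V' _ _ _ _ T T' Λ g g' M N hn hT hT' hMN hNM hA hg hdeg
    classical
    have hVne : Nonempty V := hT.isConnected.nonempty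
    have hVpos : 0 < Fintype.card V := Fintype.card_pos_iff.mpr hVne
    have hcard : Fintype.card V = Fintype.card V' := card_eq_of_inv M N hMN hNM
    by_cases hsmall : Fintype.card V ≤ 2
    · -- small case
      obtain ⟨φe, hφe⟩ := exists_equiv_ne_zero M N hMN hNM
      have hlab : ∀ u, g' (φe u) = g u := fun u => (hg u (φe u) (hφe u)).symm
      have hadj : ∀ a b, T'.Adj (φe a) (φe b) ↔ T.Adj a b := by
        intro a b
        have h1 : Fintype.card V = 1 ∨ Fintype.card V = 2 := by omega
        rcases h1 with h1 | h1
        · exact iff_of_false (no_adj_of_card_one T' (by omega) _ _)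
            (no_adj_of_card_one T h1 _ _)
        · rw [adj_iff_ne_of_card_two T' hT'.isConnected (by omega),
            adj_iff_ne_of_card_two T hT.isConnected h1]
          exact not_congr φe.apply_eq_iff_eq
      exact ⟨⟨φe, fun {a b} => hadj a b⟩, hlab⟩
    · push_neg at hsmall
      have h3 : 3 ≤ Fintype.card V := hsmall
      have h3' : 3 ≤ Fintype.card V' := by omega
      have hT₂ : (T.induce {v | gdeg T v ≠ 1}).IsTree := pruned_isTree T hT h3
      have hT₂' : (T'.induce {v | gdeg T' v ≠ 1}).IsTree := pruned_isTree T' hT' h3'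
      -- degree diagonal intertwining, and the same for N
      have hDM : (Matrix.diagonal fun v => (gdeg T v : ℝ)) * M
          = M * Matrix.diagonal (fun v => (gdeg T' v : ℝ)) := by
        ext a b
        rw [Matrix.diagonal_mul, Matrix.mul_diagonal]
        by_cases h : M a b = 0
        · simp [h]
        · rw [hdeg a b h]; ring
      have hND : N * (Matrix.diagonal fun v => (gdeg T v : ℝ))
          = (Matrix.diagonal fun v => (gdeg T' v : ℝ)) * N := by
        have key : N * ((Matrix.diagonal fun v => (gdeg T v : ℝ)) * (M * N))
            = N * (M * ((Matrix.diagonal fun v => (gdeg T' v : ℝ)) * N)) := by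
          calc N * ((Matrix.diagonal fun v => (gdeg T v : ℝ)) * (M * N))
              = N * (((Matrix.diagonal fun v => (gdeg T v : ℝ)) * M) * N) := by
                rw [Matrix.mul_assoc]
            _ = N * ((M * (Matrix.diagonal fun v => (gdeg T' v : ℝ))) * N) := by rw [hDM]
            _ = N * (M * ((Matrix.diagonal fun v => (gdeg T' v : ℝ)) * N)) := by
                rw [Matrix.mul_assoc]
        rw [hMN, Matrix.mul_one] at key
        rw [key, ← Matrix.mul_assoc, ← Matrix.mul_assoc, hNM, Matrix.one_mul]
      have hdegN : ∀ v u, N v u ≠ 0 → gdeg T' v = gdeg T u := by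
        intro v u h
        have hee := congrFun (congrFun hND v) u
        rw [Matrix.mul_diagonal, Matrix.diagonal_mul] at hee
        rw [mul_comm (N v u)] at hee
        have h2 := mul_right_cancel₀ h hee
        exact_mod_cast h2.symm
      -- block vanishing
      have hMv0 : ∀ u v, gdeg T u ≠ 1 → gdeg T' v = 1 → M u v = 0 := by
        intro u v hu hv; by_contra h; exact hu (by rw [hdeg u v h, hv])
      have hMv0' : ∀ u v, gdeg T u = 1 → gdeg T' v ≠ 1 → M u v = 0 := by
        intro u v hu hv; by_contra h; exact hv (by rw [← hdeg u v h, hu])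
      -- restricted matrices
      set M₂ : Matrix ↥{v | gdeg T v ≠ 1} ↥{v | gdeg T' v ≠ 1} ℝ :=
        Matrix.of (fun a b => M a.1 b.1) with hM₂def
      set N₂ : Matrix ↥{v | gdeg T' v ≠ 1} ↥{v | gdeg T v ≠ 1} ℝ :=
        Matrix.of (fun b a => N b.1 a.1) with hN₂def
      have hMN₂ : M₂ * N₂ = 1 := by
        ext a b
        rw [Matrix.mul_apply]
        have hfull : ∑ v : ↥{v | gdeg T' v ≠ 1}, M a.1 v.1 * N v.1 b.1
            = ∑ v : V', M a.1 v * N v b.1 := by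
          apply sum_subtype_eq_sum (fun v => M a.1 v * N v b.1)
          intro v hv
          have hv1 : gdeg T' v = 1 := by simpa using hv
          rw [hMv0 a.1 v a.2 hv1, zero_mul]
        calc ∑ v : ↥{v | gdeg T' v ≠ 1}, M₂ a v * N₂ v b
            = ∑ v : V', M a.1 v * N v b.1 := hfull
          _ = (M * N) a.1 b.1 := (Matrix.mul_apply).symm
          _ = (1 : Matrix V V ℝ) a.1 b.1 := by rw [hMN]
          _ = (1 : Matrix ↥{v | gdeg T v ≠ 1} ↥{v | gdeg T v ≠ 1} ℝ) a b := by
              rw [Matrix.one_apply, Matrix.one_apply]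
              simp [Subtype.ext_iff]
      have hNM₂ : N₂ * M₂ = 1 := by
        ext b a
        rw [Matrix.mul_apply]
        have hfull : ∑ u : ↥{v | gdeg T v ≠ 1}, N b.1 u.1 * M u.1 a.1
            = ∑ u : V, N b.1 u * M u a.1 := by
          apply sum_subtype_eq_sum (fun u => N b.1 u * M u a.1)
          intro u hu
          have hu1 : gdeg T u = 1 := by simpa using hu
          rw [hMv0' u a.1 hu1 a.2, mul_zero]
        calc ∑ u : ↥{v | gdeg T v ≠ 1}, N₂ b u * M₂ u a
            = ∑ u : V, N b.1 u * M u a.1 := hfull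
          _ = (N * M) b.1 a.1 := (Matrix.mul_apply).symm
          _ = (1 : Matrix V' V' ℝ) b.1 a.1 := by rw [hNM]
          _ = (1 : Matrix ↥{v | gdeg T' v ≠ 1} ↥{v | gdeg T' v ≠ 1} ℝ) b a := by
              rw [Matrix.one_apply, Matrix.one_apply]
              simp [Subtype.ext_iff]
      -- adjacency matrices restrict
      have hadjres : ∀ (a b : ↥{v | gdeg T v ≠ 1}),
          adjMat (T.induce {v | gdeg T v ≠ 1}) a b = adjMat T a.1 b.1 := by
        intro a b
        have hiff : (T.induce {v | gdeg T v ≠ 1}).Adj a b ↔ T.Adj a.1 b.1 := by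
          simp [SimpleGraph.comap_adj]
        simp only [adjMat, Matrix.of_apply]
        exact if_congr hiff rfl rfl
      have hadjres' : ∀ (a b : ↥{v | gdeg T' v ≠ 1}),
          adjMat (T'.induce {v | gdeg T' v ≠ 1}) a b = adjMat T' a.1 b.1 := by
        intro a b
        have hiff : (T'.induce {v | gdeg T' v ≠ 1}).Adj a b ↔ T'.Adj a.1 b.1 := by
          simp [SimpleGraph.comap_adj]
        simp only [adjMat, Matrix.of_apply]
        exact if_congr hiff rfl rfl
      have hadjzero : ∀ (u : V) (v : V'), gdeg T u = 1 → gdeg T' v ≠ 1 → M u v = 0 := hMv0'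
      have hA₂ : adjMat (T.induce {v | gdeg T v ≠ 1}) * M₂
          = M₂ * adjMat (T'.induce {v | gdeg T' v ≠ 1}) := by
        ext a b
        rw [Matrix.mul_apply, Matrix.mul_apply]
        have hL : ∑ w : ↥{v | gdeg T v ≠ 1},
            adjMat (T.induce {v | gdeg T v ≠ 1}) a w * M₂ w b
            = (adjMat T * M) a.1 b.1 := by
          rw [Matrix.mul_apply]
          rw [show (∑ w : ↥{v | gdeg T v ≠ 1},
            adjMat (T.induce {v | gdeg T v ≠ 1}) a w * M₂ w b)
            = ∑ w : ↥{v | gdeg T v ≠ 1}, adjMat T a.1 w.1 * M w.1 b.1 from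
            Finset.sum_congr rfl (fun w _ => by rw [hadjres a w]; rfl)]
          apply sum_subtype_eq_sum (fun w => adjMat T a.1 w * M w b.1)
          intro w hw
          have hw1 : gdeg T w = 1 := by simpa using hw
          rw [hMv0' w b.1 hw1 b.2, mul_zero]
        have hR : ∑ w : ↥{v | gdeg T' v ≠ 1},
            M₂ a w * adjMat (T'.induce {v | gdeg T' v ≠ 1}) w b
            = (M * adjMat T') a.1 b.1 := by
          rw [Matrix.mul_apply]
          rw [show (∑ w : ↥{v | gdeg T' v ≠ 1},
            M₂ a w * adjMat (T'.induce {v | gdeg T' v ≠ 1}) w b)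
            = ∑ w : ↥{v | gdeg T' v ≠ 1}, M a.1 w.1 * adjMat T' w.1 b.1 from
            Finset.sum_congr rfl (fun w _ => by rw [hadjres' w b]; rfl)]
          apply sum_subtype_eq_sum (fun w => M a.1 w * adjMat T' w b.1)
          intro w hw
          have hw1 : gdeg T' w = 1 := by simpa using hw
          rw [hMv0 a.1 w a.2 hw1, zero_mul]
        rw [hL, hR, hA]
      -- counting functions
      have hcint : ∀ (γ : Λ) (u : V) (v : V'), M u v ≠ 0 →
          Set.ncard {l | T.Adj u l ∧ (gdeg T l = 1 ∧ g l = γ)}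
            = Set.ncard {l' | T'.Adj v l' ∧ (gdeg T' l' = 1 ∧ g' l' = γ)} := by
        intro γ u v h
        refine count_intertwine T T' M hA _ _ (fun l hl => hl.1) (fun l hl => hl.1) ?_ u v h
        intro a b hab
        constructor
        · rintro ⟨h1, h2⟩
          exact ⟨by rw [← hdeg a b hab, h1], by rw [← hg a b hab, h2]⟩
        · rintro ⟨h1, h2⟩
          exact ⟨by rw [hdeg a b hab, h1], by rw [hg a b hab, h2]⟩
      have hc1int : ∀ (u : V) (v : V'), M u v ≠ 0 →
          Set.ncard {l | T.Adj u l ∧ gdeg T l = 1}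
            = Set.ncard {l' | T'.Adj v l' ∧ gdeg T' l' = 1} := by
        intro u v h
        refine count_intertwine T T' M hA _ _ (fun l hl => hl) (fun l hl => hl) ?_ u v h
        intro a b hab
        constructor
        · intro h1; rw [← hdeg a b hab, h1]
        · intro h1; rw [hdeg a b hab, h1]
      -- restricted degree condition
      have hdeg₂ : ∀ (a : ↥{v | gdeg T v ≠ 1}) (b : ↥{v | gdeg T' v ≠ 1}),
          M₂ a b ≠ 0 → gdeg (T.induce {v | gdeg T v ≠ 1}) a
            = gdeg (T'.induce {v | gdeg T' v ≠ 1}) b := by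
        intro a b h
        have hM : M a.1 b.1 ≠ 0 := h
        have h1 : gdeg T a.1 = gdeg (T.induce {v | gdeg T v ≠ 1}) a
            + Set.ncard {l | T.Adj a.1 l ∧ gdeg T l = 1} := gdeg_split T a.2
        have h2 : gdeg T' b.1 = gdeg (T'.induce {v | gdeg T' v ≠ 1}) b
            + Set.ncard {l' | T'.Adj b.1 l' ∧ gdeg T' l' = 1} := gdeg_split T' b.2
        have h4 := hdeg a.1 b.1 hM
        have h5 := hc1int a.1 b.1 hM
        omega
      -- restricted labels
      have hg₂ : ∀ (a : ↥{v | gdeg T v ≠ 1}) (b : ↥{v | gdeg T' v ≠ 1}),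
          M₂ a b ≠ 0 →
          ((g a.1, fun γ => Set.ncard {l | T.Adj a.1 l ∧ (gdeg T l = 1 ∧ g l = γ)})
            : Λ × (Λ → ℕ))
          = (g' b.1, fun γ => Set.ncard {l' | T'.Adj b.1 l' ∧ (gdeg T' l' = 1 ∧ g' l' = γ)}) := by
        intro a b h
        have hM : M a.1 b.1 ≠ 0 := h
        refine Prod.ext (hg a.1 b.1 hM) ?_
        funext γ
        exact hcint γ a.1 b.1 hM
      -- cardinality bound
      have hcards : Fintype.card ↥{v | gdeg T v ≠ 1} ≤ n := by
        obtain ⟨l, hl⟩ := exists_leaf T hT (by omega)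
        have hlt : Fintype.card ↥{v | gdeg T v ≠ 1} < Fintype.card V :=
          Fintype.card_subtype_lt (x := l) (by simp [hl])
        omega
      obtain ⟨φ₂, hφ₂⟩ := ih ↥{v | gdeg T v ≠ 1} ↥{v | gdeg T' v ≠ 1}
        (T.induce {v | gdeg T v ≠ 1}) (T'.induce {v | gdeg T' v ≠ 1}) (Λ × (Λ → ℕ))
        (fun a => (g a.1, fun γ => Set.ncard {l | T.Adj a.1 l ∧ (gdeg T l = 1 ∧ g l = γ)}))
        (fun b => (g' b.1, fun γ => Set.ncard {l' | T'.Adj b.1 l' ∧ (gdeg T' l' = 1 ∧ g' l' = γ)}))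
        M₂ N₂ hcards hT₂ hT₂' hMN₂ hNM₂ hA₂ hg₂ hdeg₂
      -- extract components of the IH conclusion
      have hφg : ∀ a : ↥{v | gdeg T v ≠ 1}, g' (φ₂ a).1 = g a.1 :=
        fun a => congrArg Prod.fst (hφ₂ a)
      have hφc : ∀ (a : ↥{v | gdeg T v ≠ 1}) (γ : Λ),
          Set.ncard {l' | T'.Adj (φ₂ a).1 l' ∧ (gdeg T' l' = 1 ∧ g' l' = γ)}
            = Set.ncard {l | T.Adj a.1 l ∧ (gdeg T l = 1 ∧ g l = γ)} :=
        fun a γ => congrFun (congrArg Prod.snd (hφ₂ a)) γ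
      -- anchors
      let anc : ∀ l : V, gdeg T l = 1 → V := fun l hl => (leaf_unique_nbr T hl).choose
      have hanc : ∀ (l : V) (hl : gdeg T l = 1) (x : V), T.Adj l x ↔ x = anc l hl :=
        fun l hl => (leaf_unique_nbr T hl).choose_spec
      have hancInt : ∀ (l : V) (hl : gdeg T l = 1), gdeg T (anc l hl) ≠ 1 :=
        fun l hl => anchor_internal T hT h3 hl (hanc l hl)
      let anc' : ∀ l : V', gdeg T' l = 1 → V' := fun l hl => (leaf_unique_nbr T' hl).choose
      have hanc' : ∀ (l : V') (hl : gdeg T' l = 1) (x : V'), T'.Adj l x ↔ x = anc' l hl :=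
        fun l hl => (leaf_unique_nbr T' hl).choose_spec
      have hancInt' : ∀ (l : V') (hl : gdeg T' l = 1), gdeg T' (anc' l hl) ≠ 1 :=
        fun l hl => anchor_internal T' hT' h3' hl (hanc' l hl)
      -- fiber maps
      let F : {v : V // gdeg T v = 1} → ↥{v | gdeg T v ≠ 1} × Λ :=
        fun x => (⟨anc x.1 x.2, hancInt x.1 x.2⟩, g x.1)
      let F' : {v : V' // gdeg T' v = 1} → ↥{v | gdeg T' v ≠ 1} × Λ :=
        fun x => (⟨anc' x.1 x.2, hancInt' x.1 x.2⟩, g' x.1)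
      -- fiber cardinalities
      have hfibcard : ∀ (r : ↥{v | gdeg T v ≠ 1}) (γ : Λ),
          Nat.card {x : {v : V // gdeg T v = 1} // F x = (r, γ)}
            = Set.ncard {l | T.Adj r.1 l ∧ (gdeg T l = 1 ∧ g l = γ)} := by
        intro r γ
        rw [← Nat.card_coe_set_eq]
        apply Nat.card_congr
        refine {
          toFun := fun x => ⟨x.1.1, ?_, x.1.2, congrArg Prod.snd x.2⟩
          invFun := fun y => ⟨⟨y.1, y.2.2.1⟩, ?_⟩
          left_inv := fun x => by apply Subtype.ext; apply Subtype.ext; rfl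
          right_inv := fun y => by apply Subtype.ext; rfl }
        · have h6 : T.Adj x.1.1 (anc x.1.1 x.1.2) := (hanc x.1.1 x.1.2 _).mpr rfl
          have hv : anc x.1.1 x.1.2 = r.1 := congrArg (fun z => (Prod.fst z).1) x.2
          rw [hv] at h6
          exact h6.symm
        · have h7 : T.Adj y.1 r.1 := (y.2.1 : T.Adj r.1 y.1).symm
          refine Prod.ext (Subtype.ext ?_) y.2.2.2
          exact ((hanc y.1 y.2.2.1 r.1).mp h7).symm
      have hfibcard' : ∀ (r : ↥{v | gdeg T' v ≠ 1}) (γ : Λ),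
          Nat.card {x : {v : V' // gdeg T' v = 1} // F' x = (r, γ)}
            = Set.ncard {l | T'.Adj r.1 l ∧ (gdeg T' l = 1 ∧ g' l = γ)} := by
        intro r γ
        rw [← Nat.card_coe_set_eq]
        apply Nat.card_congr
        refine {
          toFun := fun x => ⟨x.1.1, ?_, x.1.2, congrArg Prod.snd x.2⟩
          invFun := fun y => ⟨⟨y.1, y.2.2.1⟩, ?_⟩
          left_inv := fun x => by apply Subtype.ext; apply Subtype.ext; rfl
          right_inv := fun y => by apply Subtype.ext; rfl }
        · have h6 : T'.Adj x.1.1 (anc' x.1.1 x.1.2) := (hanc' x.1.1 x.1.2 _).mpr rfl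
          have hv : anc' x.1.1 x.1.2 = r.1 := congrArg (fun z => (Prod.fst z).1) x.2
          rw [hv] at h6
          exact h6.symm
        · have h7 : T'.Adj y.1 r.1 := (y.2.1 : T'.Adj r.1 y.1).symm
          refine Prod.ext (Subtype.ext ?_) y.2.2.2
          exact ((hanc' y.1 y.2.2.1 r.1).mp h7).symm
      -- base-pair equivalence
      let bp : (↥{v | gdeg T v ≠ 1} × Λ) ≃ (↥{v | gdeg T' v ≠ 1} × Λ) :=
        φ₂.toEquiv.prodCongr (Equiv.refl Λ)
      have hbp : ∀ (r : ↥{v | gdeg T v ≠ 1}) (γ : Λ), bp (r, γ) = (φ₂ r, γ) := fun r γ => rfl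
      -- fiber equivalences
      have hfib : ∀ p : ↥{v | gdeg T v ≠ 1} × Λ,
          Fintype.card {x // F x = p} = Fintype.card {y // F' y = bp p} := by
        rintro ⟨r, γ⟩
        rw [← Nat.card_eq_fintype_card, ← Nat.card_eq_fintype_card, hbp r γ,
          hfibcard r γ, hfibcard' (φ₂ r) γ]
        exact (hφc r γ).symm
      let fib : ∀ p : ↥{v | gdeg T v ≠ 1} × Λ, {x // F x = p} ≃ {y // F' y = bp p} :=
        fun p => Fintype.equivOfCardEq (hfib p)
      -- the equivalence on leaves
      let eqLeaf : {v : V // gdeg T v = 1} ≃ {v : V' // gdeg T' v = 1} :=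
        ((Equiv.sigmaFiberEquiv F).symm.trans (Equiv.sigmaCongr bp fib)).trans
          (Equiv.sigmaFiberEquiv F')
      have hspec : ∀ x, F' (eqLeaf x) = bp (F x) := fun x => (fib (F x) ⟨x, rfl⟩).2
      have hanch : ∀ x : {v : V // gdeg T v = 1},
          anc' (eqLeaf x).1 (eqLeaf x).2 = (φ₂ ⟨anc x.1 x.2, hancInt x.1 x.2⟩).1 := by
        intro x
        have := congrArg (fun z => (Prod.fst z).1) (hspec x)
        exact this
      have hgL : ∀ x : {v : V // gdeg T v = 1}, g' (eqLeaf x).1 = g x.1 := by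
        intro x
        exact congrArg Prod.snd (hspec x)
      -- total equivalence
      let φtot : V ≃ V' :=
        ((Equiv.sumCompl (fun v => gdeg T v = 1)).symm.trans
          ((Equiv.sumCongr eqLeaf φ₂.toEquiv).trans
            (Equiv.sumCompl (fun v => gdeg T' v = 1))))
      have hφint : ∀ (a : V) (ha : ¬ gdeg T a = 1), φtot a = (φ₂ ⟨a, ha⟩).1 := by
        intro a ha
        show (Equiv.sumCompl (fun v => gdeg T' v = 1))
          ((Equiv.sumCongr eqLeaf φ₂.toEquiv)
            ((Equiv.sumCompl (fun v => gdeg T v = 1)).symm a)) = _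
        rw [Equiv.sumCompl_symm_apply_of_neg (p := fun v => gdeg T v = 1) ha]
        rfl
      have hφleaf : ∀ (a : V) (ha : gdeg T a = 1), φtot a = (eqLeaf ⟨a, ha⟩).1 := by
        intro a ha
        show (Equiv.sumCompl (fun v => gdeg T' v = 1))
          ((Equiv.sumCongr eqLeaf φ₂.toEquiv)
            ((Equiv.sumCompl (fun v => gdeg T v = 1)).symm a)) = _
        rw [Equiv.sumCompl_symm_apply_of_pos (p := fun v => gdeg T v = 1) ha]
        rfl
      -- adjacency: mixed case
      have hcase2 : ∀ (a b : V) (ha : gdeg T a = 1) (hb : ¬ gdeg T b = 1),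
          (T.Adj a b ↔ T'.Adj (φtot a) (φtot b)) := by
        intro a b ha hb
        rw [hφleaf a ha, hφint b hb]
        constructor
        · intro hadj
          have hb' : b = anc a ha := (hanc a ha b).mp hadj
          rw [hanc' (eqLeaf ⟨a, ha⟩).1 (eqLeaf ⟨a, ha⟩).2 (φ₂ ⟨b, hb⟩).1,
            hanch ⟨a, ha⟩]
          apply congrArg
          apply congrArg
          exact Subtype.ext hb'
        · intro hadj
          have h8 := (hanc' (eqLeaf ⟨a, ha⟩).1 (eqLeaf ⟨a, ha⟩).2 (φ₂ ⟨b, hb⟩).1).mp hadj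
          rw [hanch ⟨a, ha⟩] at h8
          have h9 : φ₂ ⟨b, hb⟩ = φ₂ ⟨anc a ha, hancInt a ha⟩ := Subtype.ext h8
          have h10 : (⟨b, hb⟩ : ↥{v | gdeg T v ≠ 1}) = ⟨anc a ha, hancInt a ha⟩ :=
            φ₂.toEquiv.injective h9
          have h11 : b = anc a ha := congrArg Subtype.val h10
          exact (hanc a ha b).mpr h11
      have hadjiff : ∀ a b, T.Adj a b ↔ T'.Adj (φtot a) (φtot b) := by
        intro a b
        by_cases ha : gdeg T a = 1 <;> by_cases hb : gdeg T b = 1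
        · constructor
          · intro h
            have := card_le_two_of_leaf_adj_leaf T hT.isConnected ha hb h
            omega
          · intro h
            have h1' : gdeg T' (φtot a) = 1 := by
              rw [hφleaf a ha]; exact (eqLeaf ⟨a, ha⟩).2
            have h2' : gdeg T' (φtot b) = 1 := by
              rw [hφleaf b hb]; exact (eqLeaf ⟨b, hb⟩).2
            have := card_le_two_of_leaf_adj_leaf T' hT'.isConnected h1' h2' h
            omega
        · exact hcase2 a b ha hb
        · rw [T.adj_comm, T'.adj_comm]
          exact hcase2 b a hb ha
        · rw [hφint a ha, hφint b hb]
          have hstep : T.Adj a b ↔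
              (T.induce {v | gdeg T v ≠ 1}).Adj ⟨a, ha⟩ ⟨b, hb⟩ := by
            simp [SimpleGraph.comap_adj]
          rw [hstep, ← φ₂.map_adj_iff]
          simp [SimpleGraph.comap_adj]
      have hlabels : ∀ u, g' (φtot u) = g u := by
        intro u
        by_cases hu : gdeg T u = 1
        · rw [hφleaf u hu]; exact hgL ⟨u, hu⟩
        · rw [hφint u hu]; exact hφg ⟨u, hu⟩
      exact ⟨⟨φtot, fun {a b} => (hadjiff a b).symm⟩, hlabels⟩


section Final

lemma forward_dir {V W : Type*} [Fintype V] [Fintype W]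
    [DecidableEq V] [DecidableEq W] (G : SimpleGraph V) (H : SimpleGraph W)
    (hG : G.IsTree) (hH : H.IsTree) (h : DegreeSimilar G H) : Nonempty (G ≃g H) := by
  classical
  obtain ⟨e, M, hM, h1, h2⟩ := h
  have hT'eq : (adjMat H).submatrix ⇑e ⇑e = adjMat (H.comap ⇑e) := by
    ext a b
    simp only [adjMat, Matrix.submatrix_apply, Matrix.of_apply]
    rfl
  have hdegT' : ∀ a, gdeg (H.comap ⇑e) a = gdeg H (e a) := gdeg_comap H e
  have hdeg'eq : (degMat H).submatrix ⇑e ⇑e = degMat (H.comap ⇑e) := by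
    rw [degMat, degMat, Matrix.submatrix_diagonal_equiv]
    have hfn : ((fun v => ((gdeg H v : ℝ))) ∘ ⇑e) = fun a => ((gdeg (H.comap ⇑e) a : ℝ)) := by
      funext a
      show ((gdeg H (e a) : ℝ)) = ((gdeg (H.comap ⇑e) a : ℝ))
      rw [hdegT' a]
    rw [hfn]
  have hdet : IsUnit M.det := (Matrix.isUnit_iff_isUnit_det M).mp hM
  have hMN : M * M⁻¹ = 1 := Matrix.mul_nonsing_inv M hdet
  have hNM : M⁻¹ * M = 1 := Matrix.nonsing_inv_mul M hdet
  have hAM : adjMat G * M = M * adjMat (H.comap ⇑e) := by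
    rw [← hT'eq, ← h1, ← Matrix.mul_assoc, ← Matrix.mul_assoc, hMN, Matrix.one_mul]
  have hDM : degMat G * M = M * degMat (H.comap ⇑e) := by
    rw [← hdeg'eq, ← h2, ← Matrix.mul_assoc, ← Matrix.mul_assoc, hMN, Matrix.one_mul]
  have hdegp : ∀ u v, M u v ≠ 0 → gdeg G u = gdeg (H.comap ⇑e) v := by
    intro u v h
    have hee := congrFun (congrFun hDM u) v
    rw [degMat, degMat, Matrix.diagonal_mul, Matrix.mul_diagonal] at hee
    rw [mul_comm ((gdeg G u : ℝ)) (M u v)] at hee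
    exact_mod_cast mul_left_cancel₀ h hee
  have hisoc : (H.comap ⇑e) ≃g H := SimpleGraph.Iso.comap e H
  have hT'tree : (H.comap ⇑e).IsTree := isTree_of_iso hisoc hH
  obtain ⟨φ, -⟩ := tree_intertwine (Fintype.card V) V V G (H.comap ⇑e) Unit
    (fun _ => ()) (fun _ => ()) M M⁻¹ le_rfl hG hT'tree hMN hNM hAM
    (fun _ _ _ => rfl) hdegp
  exact ⟨φ.trans hisoc⟩

end Final

/-- Two finite trees are degree similar if and only if they are isomorphic. -/
theorem trees_degreeSimilar_iff_iso {V W : Type*} [Fintype V] [Fintype W]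
    [DecidableEq V] [DecidableEq W] (G : SimpleGraph V) (H : SimpleGraph W)
    (hG : G.IsTree) (hH : H.IsTree) :
    DegreeSimilar G H ↔ Nonempty (G ≃g H) := by
  constructor
  · exact forward_dir G H hG hH
  · rintro ⟨φ⟩
    classical
    refine ⟨φ.toEquiv, 1, isUnit_one, ?_, ?_⟩
    · have hinv : (1 : Matrix V V ℝ)⁻¹ = 1 := Matrix.inv_eq_left_inv (by rw [Matrix.one_mul])
      rw [hinv, Matrix.one_mul, Matrix.mul_one]
      ext a b
      simp only [adjMat, Matrix.submatrix_apply, Matrix.of_apply]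
      exact if_congr φ.map_adj_iff.symm rfl rfl
    · have hinv : (1 : Matrix V V ℝ)⁻¹ = 1 := Matrix.inv_eq_left_inv (by rw [Matrix.one_mul])
      rw [hinv, Matrix.one_mul, Matrix.mul_one]
      rw [degMat, degMat, Matrix.submatrix_diagonal_equiv]
      have hfn : ((fun v => ((gdeg H v : ℝ))) ∘ ⇑φ.toEquiv) = fun a => ((gdeg G a : ℝ)) := by
        funext a
        show ((gdeg H (φ.toEquiv a) : ℝ)) = ((gdeg G a : ℝ))
        rw [gdeg_iso φ a]
        rfl
      rw [hfn]
end

section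
/- Let T₁ be the tree on vertex set {1,…,16} with root 1 and edge set {{1,2},{2,3},{3,4},{2,5},{5,6},{1,7},{7,8},{8,9},{9,10},{10,11},{8,12},{12,13},{13,14},{14,15},{14,16}}, and let T₂ be the tree on vertex set {1,…,16} with root 1 and edge set {{1,2},{2,3},{3,4},{3,5},{1,6},{6,7},{7,8},{8,9},{6,10},{10,11},{11,12},{12,13},{13,14},{12,15},{15,16}}. Let S be any finite simple graph with at least two vertices and let r ∈ V(S). For i ∈ {1,2} let Sᵢ = S • Tᵢ be the coalescence obtained by identifying the root of Tᵢ with r, i.e., the graph on V(S) ⊔ (V(Tᵢ)∖{root}) whose edges are those of S, those of Tᵢ not incident to the root, and an edge from r to each neighbor of the root in Tᵢ. Then ψ(S₁,t,μ) = ψ(S₂,t,μ). -/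
open Matrix

/-- The generalized characteristic polynomial `ψ(X,t,μ) = det(tI - (A - μ D))`,
as the characteristic polynomial (in `t`) of the matrix `A - μ•D` over `ℝ[μ]`. -/
noncomputable def psi {V : Type*} [Fintype V] [DecidableEq V] (G : SimpleGraph V) :
    Polynomial (Polynomial ℝ) :=
  Matrix.charpoly ((adjMat G).map Polynomial.C - (Polynomial.X : Polynomial ℝ) • (degMat G).map Polynomial.C)

/-- The tree `T₁` (vertices `0,…,15`, root `0`). -/
def T1 : SimpleGraph (Fin 16) :=
  SimpleGraph.fromRel fun a b => ((a : ℕ), (b : ℕ)) ∈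
    [(0,1),(1,2),(2,3),(1,4),(4,5),(0,6),(6,7),(7,8),(8,9),(9,10),(7,11),(11,12),
     (12,13),(13,14),(13,15)]

/-- The tree `T₂` (vertices `0,…,15`, root `0`). -/
def T2 : SimpleGraph (Fin 16) :=
  SimpleGraph.fromRel fun a b => ((a : ℕ), (b : ℕ)) ∈
    [(0,1),(1,2),(2,3),(2,4),(0,5),(5,6),(6,7),(7,8),(5,9),(9,10),(10,11),(11,12),
     (12,13),(11,14),(14,15)]

/-- The coalescence `S • T` of a graph `S` (at the vertex `r`) with a graph `T` on
`Fin 16` rooted at `0`: the root of `T` is identified with `r`. -/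
def coalescence {V : Type*} (S : SimpleGraph V) (r : V) (T : SimpleGraph (Fin 16)) :
    SimpleGraph (V ⊕ {x : Fin 16 // x ≠ 0}) :=
  SimpleGraph.fromRel fun a b =>
    match a, b with
    | Sum.inl a, Sum.inl b => S.Adj a b
    | Sum.inr a, Sum.inr b => T.Adj a.val b.val
    | Sum.inl a, Sum.inr b => a = r ∧ T.Adj 0 b.val
    | Sum.inr _, Sum.inl _ => False

set_option linter.unusedSectionVars false
set_option maxRecDepth 10000

namespace PsiAux
open Matrix Polynomial

def nL0 : List (List ℤ) :=
  [[1, 0, 0, 0, 0, 0, 0, 0, 0, 0, 0, 0, 0, 0, 0, 0],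
  [0, 0, 0, 0, 0, 0, -1, 0, 1, 1, 0, -1, 0, 1, 0, 1],
  [0, 0, 0, 0, 0, 0, 0, 0, 0, 0, 0, 0, 1, 0, -1, 0],
  [0, 0, 0, 0, 0, 0, 1, 0, -1, -1, 0, 1, 0, 0, 0, -2],
  [0, 0, 0, 0, 0, 0, 0, 0, 0, 0, 0, 0, -1, 0, 1, 0],
  [0, 0, 0, 0, 0, 0, 1, 0, -1, -1, 0, 1, 0, -2, 0, 0],
  [0, 0, 0, 0, 0, 0, 1, 0, -1, -1, 0, 1, 0, -1, 0, -1],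
  [0, 0, 0, 0, 0, 0, 0, 0, 0, 0, 0, 0, 0, 0, 0, 0],
  [0, 0, 0, 0, 0, 0, -1, 0, 1, 1, 0, -1, 0, 1, 0, 1],
  [0, 0, 0, 0, 0, 0, 0, 0, 0, 0, 0, 0, 0, 0, 0, 0],
  [0, 0, 0, 0, 0, 0, 1, 0, -1, -1, 0, 1, 0, -1, 0, -1],
  [0, 0, 0, 0, 0, 0, 0, 0, 0, 0, 0, 0, 0, 0, 0, 0],
  [0, 0, 0, 0, 0, 0, 0, 0, 0, 0, 0, 0, 0, 0, 0, 0],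
  [0, 0, 0, 0, 0, 0, 0, 0, 0, 0, 0, 0, 0, 0, 0, 0],
  [0, 0, 0, 0, 0, 0, 0, 0, 0, 0, 0, 0, 0, 0, 0, 0],
  [0, 0, 0, 0, 0, 0, 0, 0, 0, 0, 0, 0, 0, 0, 0, 0]]
def nL1 : List (List ℤ) :=
  [[0, 0, 0, 0, 0, 0, 0, 0, 0, 0, 0, 0, 0, 0, 0, 0],
  [0, 0, 0, 0, 0, 1, 0, 0, 0, 0, 0, 0, -1, 0, -1, 0],
  [0, 0, 0, 0, 0, 0, 0, 0, 1, 1, 0, -1, 0, 0, 0, 1],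
  [0, 0, 0, 0, 0, 0, 0, 1, 0, 0, 0, 0, 0, 0, 1, 0],
  [0, 0, 0, 0, 0, 0, 0, 0, 1, 1, 0, -1, 0, 1, 0, 0],
  [0, 0, 0, 0, 0, 0, 0, 1, 0, 0, 0, 0, 1, 0, 0, 0],
  [0, 1, 0, 0, 0, 0, 0, 0, 0, 0, 0, 0, 1, 0, 1, 0],
  [0, 0, 1, 0, 0, 0, 0, 0, -1, 0, 0, 1, 0, 0, 0, 0],
  [0, 0, 0, 1, 1, 0, 0, -1, 0, 0, 0, 0, 0, 0, 0, 0],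
  [0, 0, 1, 0, 0, 0, -1, 0, 1, 0, 0, 0, 0, 1, 0, 1],
  [0, 1, 0, 0, 0, -1, 0, 1, 0, 0, 0, 0, 1, 0, 1, 0],
  [0, 0, 0, 0, 0, 0, 0, 0, 0, 0, 1, 0, 0, 0, 0, 0],
  [0, 0, -1, 0, 0, 0, 0, 0, 1, 1, 0, 0, 0, 0, 0, 0],
  [0, -1, 0, -1, -1, 1, 0, 1, 0, 0, 0, 0, 0, 0, 0, 0],
  [0, 0, -1, 0, 0, 0, 1, 0, 0, 0, 0, 0, 0, 0, 0, 0],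
  [0, 0, -1, 0, 0, 0, 1, 0, 0, 0, 0, 0, 0, 0, 0, 0]]
def nL2 : List (List ℤ) :=
  [[0, 0, 0, 0, 0, 0, 0, 0, 0, 0, 0, 0, 0, 0, 0, 0],
  [0, 0, 0, 0, 0, 0, 0, 0, 0, 0, 0, 0, 0, 0, 0, 0],
  [0, 0, 0, 0, 0, 0, 0, 0, 0, 0, 0, 0, 0, 0, -1, 0],
  [0, 0, 0, 0, 0, 0, 0, 0, 1, 0, 0, 0, 0, 0, 0, 0],
  [0, 0, 0, 0, 0, 0, 0, 0, 0, 0, 0, 0, -1, 0, 0, 0],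
  [0, 0, 0, 0, 0, 0, 0, 0, 1, 0, 0, 0, 0, 0, 0, 0],
  [0, 0, 0, 0, 0, 0, 0, 0, 0, 0, 0, 0, 0, 0, 0, 0],
  [0, 0, 0, 0, 0, 0, 0, 0, 0, 0, 0, 0, 0, 0, 0, 0],
  [0, 0, 0, 0, 0, 0, 0, 0, -2, 0, 0, 0, 0, 0, 0, 0],
  [0, 0, 0, 1, 1, 0, 0, -2, 0, 0, 0, 0, 0, 0, 0, 0],
  [0, 0, 1, 0, 0, 0, -2, 0, 1, 0, 0, 0, 0, 1, 0, 1],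
  [0, 0, 0, 0, 0, 0, 0, 0, 0, 0, 0, 0, 0, 0, 0, 0],
  [0, 0, 0, 0, 0, 0, 0, 0, 0, 0, 0, 0, 0, 0, 0, 0],
  [0, 0, 1, 0, 0, 0, 0, 0, 1, 0, 0, 0, 0, 0, 0, 0],
  [0, 0, 0, 0, -1, 0, 0, 1, 0, 0, 0, 0, 0, 0, 0, 0],
  [0, 0, 0, -1, 0, 0, 0, 1, 0, 0, 0, 0, 0, 0, 0, 0]]
def nL3 : List (List ℤ) :=
  [[0, 0, 0, 0, 0, 0, 0, 0, 0, 0, 0, 0, 0, 0, 0, 0],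
  [0, 0, 0, 0, 0, 0, 0, 0, 0, 0, 0, 0, 0, 0, 0, 0],
  [0, 0, 0, 0, 0, 0, 0, 0, 0, 0, 0, 0, 0, 0, 0, 0],
  [0, 0, 0, 0, 0, 0, 0, 0, 0, 0, 0, 0, 0, 0, 0, 0],
  [0, 0, 0, 0, 0, 0, 0, 0, 0, 0, 0, 0, 0, 0, 0, 0],
  [0, 0, 0, 0, 0, 0, 0, 0, 0, 0, 0, 0, 0, 0, 0, 0],
  [0, 0, 0, 0, 0, 0, 0, 0, 0, 0, 0, 0, 0, 0, 0, 0],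
  [0, 0, 0, 0, 0, 0, 0, 0, 0, 0, 0, 0, 0, 0, 0, 0],
  [0, 0, 0, 0, 0, 0, 0, 0, 0, 0, 0, 0, 0, 0, 0, 0],
  [0, 0, 0, 0, 0, 0, 0, 0, -2, 0, 0, 0, 0, 0, 0, 0],
  [0, 0, 0, 1, 1, 0, 0, -2, 0, 0, 0, 0, 0, 0, 0, 0],
  [0, 0, 0, 0, 0, 0, 0, 0, 0, 0, 0, 0, 0, 0, 0, 0],
  [0, 0, 0, 0, 0, 0, 0, 0, 0, 0, 0, 0, 0, 0, 0, 0],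
  [0, 0, 0, 0, 0, 0, 0, 0, 0, 0, 0, 0, 0, 0, 0, 0],
  [0, 0, 0, 0, 0, 0, 0, 0, 1, 0, 0, 0, 0, 0, 0, 0],
  [0, 0, 0, 0, 0, 0, 0, 0, 1, 0, 0, 0, 0, 0, 0, 0]]
def nL4 : List (List ℤ) :=
  [[0, 0, 0, 0, 0, 0, 0, 0, 0, 0, 0, 0, 0, 0, 0, 0],
  [0, 0, 0, 0, 0, 0, 0, 0, 0, 0, 0, 0, 0, 0, 0, 0],
  [0, 0, 0, 0, 0, 0, 0, 0, 0, 0, 0, 0, 0, 0, 0, 0],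
  [0, 0, 0, 0, 0, 0, 0, 0, 0, 0, 0, 0, 0, 0, 0, 0],
  [0, 0, 0, 0, 0, 0, 0, 0, 0, 0, 0, 0, 0, 0, 0, 0],
  [0, 0, 0, 0, 0, 0, 0, 0, 0, 0, 0, 0, 0, 0, 0, 0],
  [0, 0, 0, 0, 0, 0, 0, 0, 0, 0, 0, 0, 0, 0, 0, 0],
  [0, 0, 0, 0, 0, 0, 0, 0, 0, 0, 0, 0, 0, 0, 0, 0],
  [0, 0, 0, 0, 0, 0, 0, 0, 0, 0, 0, 0, 0, 0, 0, 0],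
  [0, 0, 0, 0, 0, 0, 0, 0, 0, 0, 0, 0, 0, 0, 0, 0],
  [0, 0, 0, 0, 0, 0, 0, 0, -2, 0, 0, 0, 0, 0, 0, 0],
  [0, 0, 0, 0, 0, 0, 0, 0, 0, 0, 0, 0, 0, 0, 0, 0],
  [0, 0, 0, 0, 0, 0, 0, 0, 0, 0, 0, 0, 0, 0, 0, 0],
  [0, 0, 0, 0, 0, 0, 0, 0, 0, 0, 0, 0, 0, 0, 0, 0],
  [0, 0, 0, 0, 0, 0, 0, 0, 0, 0, 0, 0, 0, 0, 0, 0],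
  [0, 0, 0, 0, 0, 0, 0, 0, 0, 0, 0, 0, 0, 0, 0, 0]]
def aL1 : List (List ℤ) :=
  [[0, 0, 0, 0, 0, 0, 0, 0, 0, 0, 0, 0, 0, 0, 0, 0],
  [0, 0, 1, 0, 1, 0, 0, 0, 0, 0, 0, 0, 0, 0, 0, 0],
  [0, 1, 0, 1, 0, 0, 0, 0, 0, 0, 0, 0, 0, 0, 0, 0],
  [0, 0, 1, 0, 0, 0, 0, 0, 0, 0, 0, 0, 0, 0, 0, 0],
  [0, 1, 0, 0, 0, 1, 0, 0, 0, 0, 0, 0, 0, 0, 0, 0],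
  [0, 0, 0, 0, 1, 0, 0, 0, 0, 0, 0, 0, 0, 0, 0, 0],
  [0, 0, 0, 0, 0, 0, 0, 1, 0, 0, 0, 0, 0, 0, 0, 0],
  [0, 0, 0, 0, 0, 0, 1, 0, 1, 0, 0, 1, 0, 0, 0, 0],
  [0, 0, 0, 0, 0, 0, 0, 1, 0, 1, 0, 0, 0, 0, 0, 0],
  [0, 0, 0, 0, 0, 0, 0, 0, 1, 0, 1, 0, 0, 0, 0, 0],
  [0, 0, 0, 0, 0, 0, 0, 0, 0, 1, 0, 0, 0, 0, 0, 0],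
  [0, 0, 0, 0, 0, 0, 0, 1, 0, 0, 0, 0, 1, 0, 0, 0],
  [0, 0, 0, 0, 0, 0, 0, 0, 0, 0, 0, 1, 0, 1, 0, 0],
  [0, 0, 0, 0, 0, 0, 0, 0, 0, 0, 0, 0, 1, 0, 1, 1],
  [0, 0, 0, 0, 0, 0, 0, 0, 0, 0, 0, 0, 0, 1, 0, 0],
  [0, 0, 0, 0, 0, 0, 0, 0, 0, 0, 0, 0, 0, 1, 0, 0]]
def aL2 : List (List ℤ) :=
  [[0, 0, 0, 0, 0, 0, 0, 0, 0, 0, 0, 0, 0, 0, 0, 0],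
  [0, 0, 1, 0, 0, 0, 0, 0, 0, 0, 0, 0, 0, 0, 0, 0],
  [0, 1, 0, 1, 1, 0, 0, 0, 0, 0, 0, 0, 0, 0, 0, 0],
  [0, 0, 1, 0, 0, 0, 0, 0, 0, 0, 0, 0, 0, 0, 0, 0],
  [0, 0, 1, 0, 0, 0, 0, 0, 0, 0, 0, 0, 0, 0, 0, 0],
  [0, 0, 0, 0, 0, 0, 1, 0, 0, 1, 0, 0, 0, 0, 0, 0],
  [0, 0, 0, 0, 0, 1, 0, 1, 0, 0, 0, 0, 0, 0, 0, 0],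
  [0, 0, 0, 0, 0, 0, 1, 0, 1, 0, 0, 0, 0, 0, 0, 0],
  [0, 0, 0, 0, 0, 0, 0, 1, 0, 0, 0, 0, 0, 0, 0, 0],
  [0, 0, 0, 0, 0, 1, 0, 0, 0, 0, 1, 0, 0, 0, 0, 0],
  [0, 0, 0, 0, 0, 0, 0, 0, 0, 1, 0, 1, 0, 0, 0, 0],
  [0, 0, 0, 0, 0, 0, 0, 0, 0, 0, 1, 0, 1, 0, 1, 0],
  [0, 0, 0, 0, 0, 0, 0, 0, 0, 0, 0, 1, 0, 1, 0, 0],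
  [0, 0, 0, 0, 0, 0, 0, 0, 0, 0, 0, 0, 1, 0, 0, 0],
  [0, 0, 0, 0, 0, 0, 0, 0, 0, 0, 0, 1, 0, 0, 0, 1],
  [0, 0, 0, 0, 0, 0, 0, 0, 0, 0, 0, 0, 0, 0, 1, 0]]
def wL : List (List ℤ) :=
  [[545, 0, 0, 0, 0, 0, 0, 0, 0, 0, 0, 0, 0, 0, 0, 0],
  [0, 270, 115, -65, 115, -65, 275, 40, -140, -100, 175, 0, -40, -95, 30, 30],
  [0, -40, 205, 50, 205, 50, 40, 95, -60, 35, 75, 0, -95, 115, -65, -65],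
  [0, 70, 50, 185, 50, 185, -70, -30, 105, 75, 5, 0, 30, -65, 250, -295],
  [0, 70, 50, 185, 50, 185, -70, -30, 105, 75, 5, 0, 30, -65, -295, 250],
  [0, 275, -115, 65, -115, 65, 270, -40, 140, 100, -175, 0, 40, 95, -30, -30],
  [0, -145, 130, 45, 130, 45, 145, 140, 55, 195, -205, 0, -140, -60, 105, 105],
  [0, 130, 15, 110, 15, 110, -130, 100, 195, -250, 165, 0, -100, 35, 75, 75],
  [0, 45, 110, 80, 110, 80, -45, -175, -205, 165, 120, 0, 175, 75, 5, 5],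
  [0, -85, 95, -30, 95, -30, 85, 270, 145, -130, -45, 0, 275, 40, -70, -70],
  [0, 0, 0, 0, 0, 0, 0, 0, 0, 0, 0, 545, 0, 0, 0, 0],
  [0, 85, -95, 30, -95, 30, -85, 275, -145, 130, 45, 0, 270, -40, 70, 70],
  [0, -95, 119, 37, -99, -72, 95, -115, 130, 15, 110, 0, 115, 205, 50, 50],
  [0, 30, 37, 126, -72, -201, -30, 65, 45, 110, 80, 0, -65, 50, 185, 185],
  [0, -95, -99, -72, 119, 37, 95, -115, 130, 15, 110, 0, 115, 205, 50, 50],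
  [0, 30, -72, -201, 37, 126, -30, 65, 45, 110, 80, 0, -65, 50, 185, 185]]
def dL1 : List ℤ := [0, 3, 2, 1, 2, 1, 2, 3, 2, 2, 1, 2, 2, 3, 1, 1]
def dL2 : List ℤ := [0, 2, 3, 1, 1, 3, 2, 2, 1, 2, 2, 3, 2, 1, 2, 1]
def chiL1 : List ℤ := [0, 1, 0, 0, 0, 0, 1, 0, 0, 0, 0, 0, 0, 0, 0, 0]
def chiL2 : List ℤ := [0, 1, 0, 0, 0, 1, 0, 0, 0, 0, 0, 0, 0, 0, 0, 0]
-- det = 545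


def toM (L : List (List ℤ)) : Matrix (Fin 16) (Fin 16) ℤ :=
  Matrix.of fun i j => ((L.getD i.val []).getD j.val 0)
def toV (L : List ℤ) : Fin 16 → ℤ := fun i => L.getD i.val 0

def nz0 := toM nL0
def nz1 := toM nL1
def nz2 := toM nL2
def nz3 := toM nL3
def nz4 := toM nL4
def az1 := toM aL1
def az2 := toM aL2
def wz := toM wL
def Dz1 : Matrix (Fin 16) (Fin 16) ℤ := Matrix.diagonal (toV dL1)
def Dz2 : Matrix (Fin 16) (Fin 16) ℤ := Matrix.diagonal (toV dL2)
def Rz1 : Matrix Unit (Fin 16) ℤ := Matrix.of fun _ j => toV chiL1 j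
def Rz2 : Matrix Unit (Fin 16) ℤ := Matrix.of fun _ j => toV chiL2 j
def Cz1 : Matrix (Fin 16) Unit ℤ := Matrix.of fun i _ => toV chiL1 i
def Cz2 : Matrix (Fin 16) Unit ℤ := Matrix.of fun i _ => toV chiL2 i

instance decT1 : DecidableRel T1.Adj := fun a b =>
  decidable_of_iff _ (SimpleGraph.fromRel_adj _ a b).symm
instance decT2 : DecidableRel T2.Adj := fun a b =>
  decidable_of_iff _ (SimpleGraph.fromRel_adj _ a b).symm

theorem f0 : nz0 * az2 = az1 * nz0 := by decide
theorem f1 : nz1 * az2 = az1 * nz1 - Dz1 * nz0 + nz0 * Dz2 := by decide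
theorem f2 : nz2 * az2 = az1 * nz2 - Dz1 * nz1 + nz1 * Dz2 := by decide
theorem f3 : nz3 * az2 = az1 * nz3 - Dz1 * nz2 + nz2 * Dz2 := by decide
theorem f4 : nz4 * az2 = az1 * nz4 - Dz1 * nz3 + nz3 * Dz2 := by decide
theorem f5 : nz4 * Dz2 = Dz1 * nz4 := by decide
theorem g0 : Rz1 * nz0 = 0 := by decide
theorem g1 : Rz1 * nz1 = Rz2 := by decide
theorem g2 : Rz1 * nz2 = 0 := by decide
theorem g3 : Rz1 * nz3 = 0 := by decide
theorem g4 : Rz1 * nz4 = 0 := by decide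
theorem h0 : nz0 * Cz2 = 0 := by decide
theorem h1 : nz1 * Cz2 = Cz1 := by decide
theorem h2 : nz2 * Cz2 = 0 := by decide
theorem h3 : nz3 * Cz2 = 0 := by decide
theorem h4 : nz4 * Cz2 = 0 := by decide
theorem hinv : (nz0 + nz1 + nz2 + nz3 + nz4) * wz = Matrix.diagonal (fun _ => (545 : ℤ)) := by decide
theorem hzero : ∀ x : Fin 16, x ≠ 0 →
    (nz0 x 0 = 0 ∧ nz1 x 0 = 0 ∧ nz2 x 0 = 0 ∧ nz3 x 0 = 0 ∧ nz4 x 0 = 0 ∧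
     az1 x 0 = 0 ∧ az2 x 0 = 0 ∧ az1 0 x = 0 ∧ az2 0 x = 0) := by decide
theorem hchi0 : toV chiL1 0 = 0 ∧ toV chiL2 0 = 0 := by decide
theorem hchisum1 : ∑ x, toV chiL1 x = 2 := by decide
theorem hchisum2 : ∑ x, toV chiL2 x = 2 := by decide
theorem hdeg1 : ∀ x : Fin 16, x ≠ 0 → toV chiL1 x + ∑ y, az1 x y = toV dL1 x := by decide
theorem hdeg2 : ∀ x : Fin 16, x ≠ 0 → toV chiL2 x + ∑ y, az2 x y = toV dL2 x := by decide
theorem hadj1 : ∀ x y : Fin 16, x ≠ 0 → y ≠ 0 →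
    (if T1.Adj x y then (1:ℤ) else 0) = az1 x y :=
  @of_decide_eq_true _ (@Fintype.decidableForallFintype _ _ (fun x => @Fintype.decidableForallFintype _ _ (fun y => inferInstance) _) _) rfl
theorem hadj2 : ∀ x y : Fin 16, x ≠ 0 → y ≠ 0 →
    (if T2.Adj x y then (1:ℤ) else 0) = az2 x y :=
  @of_decide_eq_true _ (@Fintype.decidableForallFintype _ _ (fun x => @Fintype.decidableForallFintype _ _ (fun y => inferInstance) _) _) rfl
theorem hroot1 : ∀ y : Fin 16, (if T1.Adj 0 y then (1:ℤ) else 0) = toV chiL1 y := by decide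
theorem hroot2 : ∀ y : Fin 16, (if T2.Adj 0 y then (1:ℤ) else 0) = toV chiL2 y := by decide

-- ===== chunk 2 : generic lemmas =====
abbrev Sub := {x : Fin 16 // x ≠ 0}

lemma sum_sub {M : Type*} [AddCommMonoid M] (f : Fin 16 → M) (h : f 0 = 0) :
    ∑ b : Sub, f b.val = ∑ x, f x := by
  classical
  rw [← Finset.sum_subtype (Finset.univ.filter (fun x : Fin 16 => x ≠ 0))
      (by simp) f]
  rw [Finset.sum_filter_of_ne]
  intro x _ hfx
  intro hx0
  exact hfx (hx0 ▸ h)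

lemma mulSub {R : Type*} [Semiring R] {I J : Type*} [Fintype I] [Fintype J]
    (A : Matrix I (Fin 16) R) (B : Matrix (Fin 16) J R)
    (h : ∀ i j, A i 0 * B 0 j = 0) :
    (A.submatrix (id : I → I) (Subtype.val : Sub → Fin 16)) *
      (B.submatrix (Subtype.val : Sub → Fin 16) (id : J → J)) = A * B := by
  ext i j
  rw [Matrix.mul_apply, Matrix.mul_apply]
  exact sum_sub (fun x => A i x * B x j) (h i j)

lemma rowsub_mul {R : Type*} [Semiring R] {J : Type*} [Fintype J]
    (A : Matrix (Fin 16) (Fin 16) R) (B : Matrix (Fin 16) J R) :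
    (A.submatrix (Subtype.val : Sub → Fin 16) id) * B
      = (A * B).submatrix (Subtype.val : Sub → Fin 16) id := by
  ext a j; rw [Matrix.submatrix_apply, Matrix.mul_apply, Matrix.mul_apply]; rfl

lemma mul_colsub {R : Type*} [Semiring R] {I : Type*} [Fintype I]
    (A : Matrix I (Fin 16) R) (B : Matrix (Fin 16) (Fin 16) R) :
    A * (B.submatrix id (Subtype.val : Sub → Fin 16))
      = (A * B).submatrix id (Subtype.val : Sub → Fin 16) := by
  ext i b; rw [Matrix.submatrix_apply, Matrix.mul_apply, Matrix.mul_apply]; rfl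

lemma key {R : Type*} [CommRing R] {n : Type*} [Fintype n] [DecidableEq n]
    (x : R) (m0 m1 m2 m3 m4 a1 a2 d1 d2 : Matrix n n R)
    (k0 : m0 * a2 = a1 * m0)
    (k1 : m1 * a2 = a1 * m1 - d1 * m0 + m0 * d2)
    (k2 : m2 * a2 = a1 * m2 - d1 * m1 + m1 * d2)
    (k3 : m3 * a2 = a1 * m3 - d1 * m2 + m2 * d2)
    (k4 : m4 * a2 = a1 * m4 - d1 * m3 + m3 * d2)
    (k5 : m4 * d2 = d1 * m4) :
    (m0 + x • m1 + x ^ 2 • m2 + x ^ 3 • m3 + x ^ 4 • m4) * (a2 - x • d2)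
      = (a1 - x • d1) * (m0 + x • m1 + x ^ 2 • m2 + x ^ 3 • m3 + x ^ 4 • m4) := by
  simp only [mul_sub, sub_mul, add_mul, mul_add, smul_mul_assoc, mul_smul_comm,
    k0, k1, k2, k3, k4, k5]
  module

lemma keyRow {R : Type*} [CommRing R] {n : Type*} [Fintype n] [DecidableEq n]
    (x : R) (m0 m1 m2 m3 m4 : Matrix n n R) (r1 r2 : Matrix Unit n R)
    (k0 : r1 * m0 = 0) (k1 : r1 * m1 = r2) (k2 : r1 * m2 = 0)
    (k3 : r1 * m3 = 0) (k4 : r1 * m4 = 0) :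
    r1 * (m0 + x • m1 + x ^ 2 • m2 + x ^ 3 • m3 + x ^ 4 • m4) = x • r2 := by
  simp only [Matrix.mul_add, Matrix.mul_smul, k0, k1, k2, k3, k4, smul_zero, add_zero, zero_add]

lemma keyCol {R : Type*} [CommRing R] {n : Type*} [Fintype n] [DecidableEq n]
    (x : R) (m0 m1 m2 m3 m4 : Matrix n n R) (c1 c2 : Matrix n Unit R)
    (k0 : m0 * c2 = 0) (k1 : m1 * c2 = c1) (k2 : m2 * c2 = 0)
    (k3 : m3 * c2 = 0) (k4 : m4 * c2 = 0) :
    (m0 + x • m1 + x ^ 2 • m2 + x ^ 3 • m3 + x ^ 4 • m4) * c2 = x • c1 := by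
  simp only [Matrix.add_mul, Matrix.smul_mul, k0, k1, k2, k3, k4, smul_zero, add_zero, zero_add]

lemma gdeg_eq_sum {W : Type*} [Fintype W] (G : SimpleGraph W) (v : W) :
    ((gdeg G v : ℕ) : ℝ) = ∑ u, adjMat G v u := by
  classical
  have h1 : gdeg G v = ∑ u, if G.Adj v u then 1 else 0 := by
    rw [gdeg, Nat.card_eq_fintype_card, ← Set.toFinset_card]
    rw [show (G.neighborSet v).toFinset
        = Finset.univ.filter (fun u => G.Adj v u) by
      ext u; rw [Set.mem_toFinset]; simp [SimpleGraph.neighborSet]]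
    rw [Finset.card_filter]
  rw [h1]
  push_cast
  apply Finset.sum_congr rfl
  intro u _
  by_cases h : G.Adj v u <;> simp [adjMat, h]

lemma charmatrix_eq {R : Type*} [CommRing R] {n : Type*} [Fintype n] [DecidableEq n]
    (M : Matrix n n R) :
    Matrix.charmatrix M = (Polynomial.X : R[X]) • (1 : Matrix n n R[X]) - M.map Polynomial.C := by
  ext i j
  by_cases h : i = j
  · subst h; simp [Matrix.charmatrix_apply_eq]
  · simp [Matrix.charmatrix_apply_ne _ _ _ h, Matrix.one_apply_ne h]

-- ===== chunk 3 : polynomial matrices =====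
noncomputable section

def ic : ℤ →+* Polynomial ℝ := Int.castRingHom _

def m0 : Matrix (Fin 16) (Fin 16) ℝ[X] := nz0.map ⇑ic
def m1 : Matrix (Fin 16) (Fin 16) ℝ[X] := nz1.map ⇑ic
def m2 : Matrix (Fin 16) (Fin 16) ℝ[X] := nz2.map ⇑ic
def m3 : Matrix (Fin 16) (Fin 16) ℝ[X] := nz3.map ⇑ic
def m4 : Matrix (Fin 16) (Fin 16) ℝ[X] := nz4.map ⇑ic
def Af1 : Matrix (Fin 16) (Fin 16) ℝ[X] := az1.map ⇑ic
def Af2 : Matrix (Fin 16) (Fin 16) ℝ[X] := az2.map ⇑ic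
def Df1 : Matrix (Fin 16) (Fin 16) ℝ[X] := Dz1.map ⇑ic
def Df2 : Matrix (Fin 16) (Fin 16) ℝ[X] := Dz2.map ⇑ic
def Rf1 : Matrix Unit (Fin 16) ℝ[X] := Rz1.map ⇑ic
def Rf2 : Matrix Unit (Fin 16) ℝ[X] := Rz2.map ⇑ic
def Cf1 : Matrix (Fin 16) Unit ℝ[X] := Cz1.map ⇑ic
def Cf2 : Matrix (Fin 16) Unit ℝ[X] := Cz2.map ⇑ic
def Nf : Matrix (Fin 16) (Fin 16) ℝ[X] :=
  m0 + (X : ℝ[X]) • m1 + (X : ℝ[X]) ^ 2 • m2 + (X : ℝ[X]) ^ 3 • m3 + (X : ℝ[X]) ^ 4 • m4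
def Wf1 : Matrix (Fin 16) (Fin 16) ℝ[X] := Af1 - (X : ℝ[X]) • Df1
def Wf2 : Matrix (Fin 16) (Fin 16) ℝ[X] := Af2 - (X : ℝ[X]) • Df2

lemma map_add' {I J : Type*} (A B : Matrix I J ℤ) :
    (A + B).map ⇑ic = A.map ⇑ic + B.map ⇑ic := by
  ext i j; simp [ic]

lemma map_sub' {I J : Type*} (A B : Matrix I J ℤ) :
    (A - B).map ⇑ic = A.map ⇑ic - B.map ⇑ic := by
  ext i j; simp [ic]

lemma map_zero' {I J : Type*} : ((0 : Matrix I J ℤ)).map ⇑ic = 0 := by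
  ext i j; simp [ic]

theorem keyN : Nf * Wf2 = Wf1 * Nf := by
  rw [Nf, Wf1, Wf2]
  refine key (X : ℝ[X]) m0 m1 m2 m3 m4 Af1 Af2 Df1 Df2 ?_ ?_ ?_ ?_ ?_ ?_
  · rw [m0, Af2, Af1, ← Matrix.map_mul, ← Matrix.map_mul, f0]
  · rw [m1, m0, Af2, Af1, Df1, Df2, ← Matrix.map_mul, ← Matrix.map_mul,
      ← Matrix.map_mul, ← Matrix.map_mul, ← map_sub', ← map_add', f1]
  · rw [m2, m1, Af2, Af1, Df1, Df2, ← Matrix.map_mul, ← Matrix.map_mul,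
      ← Matrix.map_mul, ← Matrix.map_mul, ← map_sub', ← map_add', f2]
  · rw [m3, m2, Af2, Af1, Df1, Df2, ← Matrix.map_mul, ← Matrix.map_mul,
      ← Matrix.map_mul, ← Matrix.map_mul, ← map_sub', ← map_add', f3]
  · rw [m4, m3, Af2, Af1, Df1, Df2, ← Matrix.map_mul, ← Matrix.map_mul,
      ← Matrix.map_mul, ← Matrix.map_mul, ← map_sub', ← map_add', f4]
  · rw [m4, Df1, Df2, ← Matrix.map_mul, ← Matrix.map_mul, f5]

theorem keyRowN : Rf1 * Nf = (X : ℝ[X]) • Rf2 := by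
  rw [Nf]
  refine keyRow (X : ℝ[X]) m0 m1 m2 m3 m4 Rf1 Rf2 ?_ ?_ ?_ ?_ ?_ <;>
    simp only [Rf1, m0, m1, m2, m3, m4, ← Matrix.map_mul]
  · rw [g0, map_zero']
  · rw [g1, Rf2]
  · rw [g2, map_zero']
  · rw [g3, map_zero']
  · rw [g4, map_zero']

theorem keyColN : Nf * Cf2 = (X : ℝ[X]) • Cf1 := by
  rw [Nf]
  refine keyCol (X : ℝ[X]) m0 m1 m2 m3 m4 Cf1 Cf2 ?_ ?_ ?_ ?_ ?_ <;>
    simp only [Cf2, m0, m1, m2, m3, m4, ← Matrix.map_mul]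
  · rw [h0, map_zero']
  · rw [h1, Cf1]
  · rw [h2, map_zero']
  · rw [h3, map_zero']
  · rw [h4, map_zero']

lemma Nf_zero {x : Fin 16} (hx : x ≠ 0) : Nf x 0 = 0 := by
  obtain ⟨z0, z1, z2, z3, z4, -, -, -, -⟩ := hzero x hx
  simp [Nf, m0, m1, m2, m3, m4, Matrix.map_apply, z0, z1, z2, z3, z4, ic]

lemma Rf1_zero : ∀ u, Rf1 u 0 = 0 := by
  intro u; simp [Rf1, Rz1, Matrix.map_apply, hchi0.1, ic]

lemma Wf1_zero {x : Fin 16} (hx : x ≠ 0) : Wf1 x 0 = 0 := by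
  obtain ⟨-, -, -, -, -, z1, -, -, -⟩ := hzero x hx
  simp [Wf1, Af1, Df1, Dz1, Matrix.map_apply, z1, ic,
    Matrix.diagonal_apply_ne _ hx]

-- restricted matrices
def NS : Matrix Sub Sub ℝ[X] := Nf.submatrix Subtype.val Subtype.val
def RS1 : Matrix Unit Sub ℝ[X] := Rf1.submatrix id Subtype.val
def RS2 : Matrix Unit Sub ℝ[X] := Rf2.submatrix id Subtype.val
def CS1 : Matrix Sub Unit ℝ[X] := Cf1.submatrix Subtype.val id
def CS2 : Matrix Sub Unit ℝ[X] := Cf2.submatrix Subtype.val id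
def WS1 : Matrix Sub Sub ℝ[X] := Wf1.submatrix Subtype.val Subtype.val
def WS2 : Matrix Sub Sub ℝ[X] := Wf2.submatrix Subtype.val Subtype.val

theorem keyRowS : RS1 * NS = (X : ℝ[X]) • RS2 := by
  have h1 : RS1 * NS = Rf1 * Nf.submatrix id Subtype.val :=
    mulSub Rf1 (Nf.submatrix id Subtype.val)
      (fun u j => by rw [Rf1_zero u, zero_mul])
  rw [h1, mul_colsub, keyRowN]
  ext u b
  simp [RS2, Matrix.submatrix_apply, Matrix.smul_apply]

theorem keyColS : NS * CS2 = (X : ℝ[X]) • CS1 := by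
  have h1 : NS * CS2 = Nf.submatrix Subtype.val id * Cf2 :=
    mulSub (Nf.submatrix Subtype.val id) Cf2
      (fun a j => by simp [Matrix.submatrix_apply, Nf_zero a.2])
  rw [h1, rowsub_mul, keyColN]
  ext a u
  simp [CS1, Matrix.submatrix_apply, Matrix.smul_apply]

theorem keyNS : NS * WS2 = WS1 * NS := by
  have h1 : NS * WS2 = (Nf * Wf2).submatrix Subtype.val Subtype.val := by
    calc NS * WS2 = Nf.submatrix Subtype.val id * Wf2.submatrix id Subtype.val :=
          mulSub (Nf.submatrix Subtype.val id) (Wf2.submatrix id Subtype.val)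
            (fun a j => by simp [Matrix.submatrix_apply, Nf_zero a.2])
      _ = (Nf * Wf2.submatrix id Subtype.val).submatrix Subtype.val id := rowsub_mul _ _
      _ = ((Nf * Wf2).submatrix id Subtype.val).submatrix Subtype.val id := by rw [mul_colsub]
      _ = (Nf * Wf2).submatrix Subtype.val Subtype.val := rfl
  have h2 : WS1 * NS = (Wf1 * Nf).submatrix Subtype.val Subtype.val := by
    calc WS1 * NS = Wf1.submatrix Subtype.val id * Nf.submatrix id Subtype.val :=
          mulSub (Wf1.submatrix Subtype.val id) (Nf.submatrix id Subtype.val)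
            (fun a j => by simp [Matrix.submatrix_apply, Wf1_zero a.2])
      _ = (Wf1 * Nf.submatrix id Subtype.val).submatrix Subtype.val id := rowsub_mul _ _
      _ = ((Wf1 * Nf).submatrix id Subtype.val).submatrix Subtype.val id := by rw [mul_colsub]
      _ = (Wf1 * Nf).submatrix Subtype.val Subtype.val := rfl
  rw [h1, h2, keyN]

end

-- ===== chunk 4 : coalescence decomposition =====
noncomputable section decompsec

variable {V : Type*} [Fintype V] [DecidableEq V]

def er (r : V) : Matrix V Unit ℝ[X] := Matrix.of fun v _ => if v = r then 1 else 0
def erT (r : V) : Matrix Unit V ℝ[X] := Matrix.of fun _ v => if v = r then 1 else 0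
def Bs (S : SimpleGraph V) (r : V) : Matrix V V ℝ[X] := Matrix.of fun v w =>
  C (adjMat S v w) -
    if v = w then (X : ℝ[X]) * C ((gdeg S v : ℝ) + if v = r then 2 else 0) else 0

variable (S : SimpleGraph V) (r : V) (T : SimpleGraph (Fin 16))

lemma coal_ll {v w : V} : (coalescence S r T).Adj (Sum.inl v) (Sum.inl w) ↔ S.Adj v w := by
  rw [coalescence, SimpleGraph.fromRel_adj]
  constructor
  · rintro ⟨h, h1 | h1⟩
    · exact h1
    · exact h1.symm
  · intro h
    exact ⟨by simp [h.ne], Or.inl h⟩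

lemma coal_lr {v : V} {b : Sub} :
    (coalescence S r T).Adj (Sum.inl v) (Sum.inr b) ↔ v = r ∧ T.Adj 0 b.val := by
  rw [coalescence, SimpleGraph.fromRel_adj]
  constructor
  · rintro ⟨-, h | h⟩
    · exact h
    · exact h.elim
  · intro h
    exact ⟨by simp, Or.inl h⟩

lemma coal_rl {v : V} {b : Sub} :
    (coalescence S r T).Adj (Sum.inr b) (Sum.inl v) ↔ v = r ∧ T.Adj 0 b.val := by
  rw [coalescence, SimpleGraph.fromRel_adj]
  constructor
  · rintro ⟨-, h | h⟩
    · exact h.elim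
    · exact h
  · intro h
    exact ⟨by simp, Or.inr h⟩

lemma coal_rr {a b : Sub} :
    (coalescence S r T).Adj (Sum.inr a) (Sum.inr b) ↔ T.Adj a.val b.val := by
  rw [coalescence, SimpleGraph.fromRel_adj]
  constructor
  · rintro ⟨-, h | h⟩
    · exact h
    · exact h.symm
  · intro h
    refine ⟨?_, Or.inl h⟩
    simp only [ne_eq, Sum.inr.injEq]
    intro he
    exact h.ne (by rw [he])

section withTables

variable [DecidableRel T.Adj]
variable (az : Matrix (Fin 16) (Fin 16) ℤ) (dz chiz : Fin 16 → ℤ)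
variable (hAdj : ∀ x y, x ≠ 0 → y ≠ 0 → (if T.Adj x y then (1:ℤ) else 0) = az x y)
variable (hRoot : ∀ y, (if T.Adj 0 y then (1:ℤ) else 0) = chiz y)
variable (hDeg : ∀ x, x ≠ 0 → chiz x + ∑ y, az x y = dz x)
variable (hSum : ∑ x, chiz x = 2)
variable (hZc : ∀ x, az x 0 = 0) (hchi0 : chiz 0 = 0)

include hRoot in
lemma adj_lr (v : V) (b : Sub) :
    adjMat (coalescence S r T) (Sum.inl v) (Sum.inr b)
      = if v = r then ((chiz b.val : ℤ) : ℝ) else 0 := by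
  classical
  show (if (coalescence S r T).Adj (Sum.inl v) (Sum.inr b) then (1:ℝ) else 0) = _
  by_cases hv : v = r
  · rw [if_pos hv]
    by_cases hb : T.Adj 0 b.val
    · have h := hRoot b.val; rw [if_pos hb] at h
      rw [if_pos ((coal_lr S r T).mpr ⟨hv, hb⟩), ← h]; norm_num
    · have h := hRoot b.val; rw [if_neg hb] at h
      rw [if_neg (fun hc => hb ((coal_lr S r T).mp hc).2), ← h]; norm_num
  · rw [if_neg hv, if_neg (fun hc => hv ((coal_lr S r T).mp hc).1)]

include hRoot in
lemma adj_rl (v : V) (b : Sub) :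
    adjMat (coalescence S r T) (Sum.inr b) (Sum.inl v)
      = if v = r then ((chiz b.val : ℤ) : ℝ) else 0 := by
  classical
  show (if (coalescence S r T).Adj (Sum.inr b) (Sum.inl v) then (1:ℝ) else 0) = _
  by_cases hv : v = r
  · rw [if_pos hv]
    by_cases hb : T.Adj 0 b.val
    · have h := hRoot b.val; rw [if_pos hb] at h
      rw [if_pos ((coal_rl S r T).mpr ⟨hv, hb⟩), ← h]; norm_num
    · have h := hRoot b.val; rw [if_neg hb] at h
      rw [if_neg (fun hc => hb ((coal_rl S r T).mp hc).2), ← h]; norm_num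
  · rw [if_neg hv, if_neg (fun hc => hv ((coal_rl S r T).mp hc).1)]

lemma adj_ll (v w : V) :
    adjMat (coalescence S r T) (Sum.inl v) (Sum.inl w) = adjMat S v w := by
  classical
  show (if (coalescence S r T).Adj (Sum.inl v) (Sum.inl w) then (1:ℝ) else 0)
    = (if S.Adj v w then (1:ℝ) else 0)
  by_cases h : S.Adj v w
  · rw [if_pos ((coal_ll S r T).mpr h), if_pos h]
  · rw [if_neg (fun hc => h ((coal_ll S r T).mp hc)), if_neg h]

include hAdj in
lemma adj_rr (a b : Sub) :
    adjMat (coalescence S r T) (Sum.inr a) (Sum.inr b) = ((az a.val b.val : ℤ) : ℝ) := by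
  classical
  show (if (coalescence S r T).Adj (Sum.inr a) (Sum.inr b) then (1:ℝ) else 0) = _
  have h2 := hAdj a.val b.val a.2 b.2
  by_cases h : T.Adj a.val b.val
  · rw [if_pos h] at h2; rw [if_pos ((coal_rr S r T).mpr h), ← h2]; norm_num
  · rw [if_neg h] at h2; rw [if_neg (fun hc => h ((coal_rr S r T).mp hc)), ← h2]; norm_num

include hRoot hSum hchi0 in
lemma gdeg_inl (v : V) :
    ((gdeg (coalescence S r T) (Sum.inl v) : ℕ) : ℝ)
      = (gdeg S v : ℝ) + (if v = r then 2 else 0) := by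
  rw [gdeg_eq_sum, Fintype.sum_sum_type]
  have h1 : ∑ w : V, adjMat (coalescence S r T) (Sum.inl v) (Sum.inl w)
      = ∑ w, adjMat S v w :=
    Finset.sum_congr rfl fun w _ => adj_ll S r T v w
  have h2 : ∑ b : Sub, adjMat (coalescence S r T) (Sum.inl v) (Sum.inr b)
      = if v = r then 2 else 0 := by
    rw [Finset.sum_congr rfl fun b _ => adj_lr S r T chiz hRoot v b]
    by_cases hv : v = r
    · rw [if_pos hv]
      simp only [if_pos hv]
      rw [sum_sub (fun x => ((chiz x : ℤ) : ℝ)) (by simp [hchi0])]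
      rw [show ∑ x, ((chiz x : ℤ) : ℝ) = ((∑ x, chiz x : ℤ) : ℝ) by push_cast; ring]
      rw [hSum]; norm_num
    · simp [hv]
  rw [h1, h2, ← gdeg_eq_sum]

include hRoot hAdj hDeg hZc in
lemma gdeg_inr (a : Sub) :
    ((gdeg (coalescence S r T) (Sum.inr a) : ℕ) : ℝ) = ((dz a.val : ℤ) : ℝ) := by
  rw [gdeg_eq_sum, Fintype.sum_sum_type]
  have h1 : ∑ w : V, adjMat (coalescence S r T) (Sum.inr a) (Sum.inl w)
      = ((chiz a.val : ℤ) : ℝ) := by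
    rw [Finset.sum_congr rfl fun w _ => adj_rl S r T chiz hRoot w a]
    rw [Finset.sum_ite_eq' Finset.univ r (fun _ => ((chiz a.val : ℤ) : ℝ))]
    rw [if_pos (Finset.mem_univ r)]
  have h2 : ∑ b : Sub, adjMat (coalescence S r T) (Sum.inr a) (Sum.inr b)
      = ((∑ y, az a.val y : ℤ) : ℝ) := by
    rw [Finset.sum_congr rfl fun b _ => adj_rr S r T az hAdj a b]
    rw [sum_sub (fun x => ((az a.val x : ℤ) : ℝ)) (by simp [hZc a.val])]
    push_cast; ring
  rw [h1, h2, ← hDeg a.val a.2]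
  push_cast; ring

include hAdj hRoot hDeg hSum hZc hchi0 in
theorem decompGen :
    (adjMat (coalescence S r T)).map C
        - (X : ℝ[X]) • (degMat (coalescence S r T)).map C
      = Matrix.fromBlocks (Bs S r)
          (er r * ((Matrix.of fun (_ : Unit) j => chiz j).map ⇑ic).submatrix id Subtype.val)
          (((Matrix.of fun i (_ : Unit) => chiz i).map ⇑ic).submatrix Subtype.val id * erT r)
          ((az.map ⇑ic - (X : ℝ[X]) • (Matrix.diagonal dz).map ⇑ic).submatrix
            Subtype.val Subtype.val) := by
  ext x y
  rcases x with v | a <;> rcases y with w | b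
  · -- (inl, inl)
    have hd : degMat (coalescence S r T) (Sum.inl v) (Sum.inl w)
        = if v = w then ((gdeg S v : ℝ) + if v = r then 2 else 0) else 0 := by
      by_cases h : v = w
      · subst h
        rw [degMat, Matrix.diagonal_apply_eq, if_pos rfl]
        exact gdeg_inl S r T chiz hRoot hSum hchi0 v
      · rw [degMat, Matrix.diagonal_apply_ne _ (by simp [h]), if_neg h]
    simp only [Matrix.sub_apply, Matrix.smul_apply, Matrix.map_apply,
      Matrix.fromBlocks_apply₁₁, hd, adj_ll S r T, Bs, Matrix.of_apply, smul_eq_mul]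
    by_cases h : v = w <;> simp [h]
  · -- (inl, inr)
    have hd : degMat (coalescence S r T) (Sum.inl v) (Sum.inr b) = 0 := by
      rw [degMat, Matrix.diagonal_apply_ne _ (by simp)]
    simp only [Matrix.sub_apply, Matrix.smul_apply, Matrix.map_apply,
      Matrix.fromBlocks_apply₁₂, hd, adj_lr S r T chiz hRoot, map_zero, smul_eq_mul,
      mul_zero, sub_zero, Matrix.mul_apply, Finset.univ_unique, Finset.sum_singleton,
      er, Matrix.of_apply, Matrix.submatrix_apply]
    by_cases hv : v = r <;> simp [hv, ic, map_intCast]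
  · -- (inr, inl)
    have hd : degMat (coalescence S r T) (Sum.inr a) (Sum.inl w) = 0 := by
      rw [degMat, Matrix.diagonal_apply_ne _ (by simp)]
    simp only [Matrix.sub_apply, Matrix.smul_apply, Matrix.map_apply,
      Matrix.fromBlocks_apply₂₁, hd, adj_rl S r T chiz hRoot, map_zero, smul_eq_mul,
      mul_zero, sub_zero, Matrix.mul_apply, Finset.univ_unique, Finset.sum_singleton,
      erT, Matrix.of_apply, Matrix.submatrix_apply]
    by_cases hw : w = r <;> simp [hw, ic, map_intCast]
  · -- (inr, inr)
    have hd : degMat (coalescence S r T) (Sum.inr a) (Sum.inr b)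
        = if a = b then ((dz a.val : ℤ) : ℝ) else 0 := by
      by_cases h : a = b
      · subst h
        rw [degMat, Matrix.diagonal_apply_eq, if_pos rfl]
        exact gdeg_inr S r T az dz chiz hAdj hRoot hDeg hZc a
      · rw [degMat, Matrix.diagonal_apply_ne _ (by simp [h]), if_neg h]
    simp only [Matrix.sub_apply, Matrix.smul_apply, Matrix.map_apply,
      Matrix.fromBlocks_apply₂₂, hd, adj_rr S r T az hAdj, Matrix.submatrix_apply,
      smul_eq_mul, Matrix.diagonal_apply]
    by_cases h : a = b
    · subst h
      simp [ic, map_intCast]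
    · have h' : a.val ≠ b.val := fun hc => h (Subtype.ext hc)
      simp [h, h', ic, map_intCast]

end withTables
end decompsec

-- ===== chunk 5 : final assembly =====
theorem hZc1 : ∀ x : Fin 16, az1 x 0 = 0 := by decide
theorem hZc2 : ∀ x : Fin 16, az2 x 0 = 0 := by decide
theorem hSnZ0 : ∀ x : Fin 16, x ≠ 0 → (nz0 + nz1 + nz2 + nz3 + nz4) x 0 = 0 := by decide

noncomputable section finalsec
open Polynomial

def rc : ℤ →+* ℝ := Int.castRingHom ℝ

lemma det_ne_of_right_inv {n : Type*} [Fintype n] [DecidableEq n]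
    (A B : Matrix n n ℝ) (d : n → ℝ) (h : A * B = Matrix.diagonal d)
    (hd : ∀ i, d i ≠ 0) : A.det ≠ 0 := by
  intro hA
  have hdet := congrArg Matrix.det h
  rw [Matrix.det_mul, Matrix.det_diagonal, hA, zero_mul] at hdet
  exact (Finset.prod_ne_zero_iff.mpr fun i _ => hd i) hdet.symm

theorem detNS_ne : NS.det ≠ 0 := by
  intro h0
  -- evaluate at 1
  have hev : ((NS.map ⇑(evalRingHom (1:ℝ))).det) = 0 := by
    rw [← RingHom.mapMatrix_apply, ← RingHom.map_det, h0, map_zero]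
  have hNSval : NS.map ⇑(evalRingHom (1:ℝ))
      = ((nz0 + nz1 + nz2 + nz3 + nz4).map ⇑rc).submatrix Subtype.val Subtype.val := by
    ext a b
    simp only [NS, Nf, m0, m1, m2, m3, m4, Matrix.map_apply, Matrix.submatrix_apply,
      Matrix.add_apply, Matrix.smul_apply, smul_eq_mul, ic, rc, eq_intCast,
      map_add, _root_.map_mul, map_pow, coe_evalRingHom, eval_intCast, eval_mul, eval_add,
      eval_pow, eval_X, one_pow, one_mul]
    try push_cast
    try ring
  have hfullinv : ((nz0 + nz1 + nz2 + nz3 + nz4).map ⇑rc) * (wz.map ⇑rc)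
      = Matrix.diagonal (fun _ => (545 : ℝ)) := by
    rw [← Matrix.map_mul, hinv]
    ext i j
    by_cases h : i = j <;>
      simp [Matrix.map_apply, Matrix.diagonal_apply, h, rc]
  have hprod : (NS.map ⇑(evalRingHom (1:ℝ))) * ((wz.map ⇑rc).submatrix Subtype.val Subtype.val)
      = Matrix.diagonal (fun _ => (545 : ℝ)) := by
    rw [hNSval]
    have step : ((nz0 + nz1 + nz2 + nz3 + nz4).map ⇑rc).submatrix
          (Subtype.val : Sub → Fin 16) (Subtype.val : Sub → Fin 16)
        * ((wz.map ⇑rc).submatrix (Subtype.val : Sub → Fin 16) (Subtype.val : Sub → Fin 16))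
        = (((nz0 + nz1 + nz2 + nz3 + nz4).map ⇑rc) * (wz.map ⇑rc)).submatrix
            (Subtype.val : Sub → Fin 16) (Subtype.val : Sub → Fin 16) := by
      have h1 : ((nz0 + nz1 + nz2 + nz3 + nz4).map ⇑rc).submatrix
            (Subtype.val : Sub → Fin 16) (Subtype.val : Sub → Fin 16)
          * ((wz.map ⇑rc).submatrix (Subtype.val : Sub → Fin 16) (Subtype.val : Sub → Fin 16))
          = ((nz0 + nz1 + nz2 + nz3 + nz4).map ⇑rc).submatrix (Subtype.val : Sub → Fin 16) id
            * ((wz.map ⇑rc).submatrix id (Subtype.val : Sub → Fin 16)) :=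
        mulSub (((nz0 + nz1 + nz2 + nz3 + nz4).map ⇑rc).submatrix (Subtype.val : Sub → Fin 16) id)
          ((wz.map ⇑rc).submatrix id (Subtype.val : Sub → Fin 16))
          (fun a j => by
            simp [Matrix.submatrix_apply, Matrix.map_apply, hSnZ0 a.val a.2, rc])
      rw [h1, rowsub_mul, mul_colsub]
      rfl
    rw [step, hfullinv]
    ext a b
    by_cases h : a = b
    · subst h; simp [Matrix.diagonal_apply, Matrix.submatrix_apply]
    · have h' : a.val ≠ b.val := fun hc => h (Subtype.ext hc)
      simp [Matrix.diagonal_apply, Matrix.submatrix_apply, h, h']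
  exact det_ne_of_right_inv _ _ _ hprod (fun _ => by norm_num) hev

variable {V : Type*} [Fintype V] [DecidableEq V]

def Pmat (V : Type*) [Fintype V] [DecidableEq V] : Matrix (V ⊕ Sub) (V ⊕ Sub) ℝ[X] :=
  Matrix.fromBlocks ((X : ℝ[X]) • 1) 0 0 NS

lemma smul_one_det_ne {n : Type*} [Fintype n] [DecidableEq n] :
    ((X : ℝ[X]) • (1 : Matrix n n ℝ[X])).det ≠ 0 := by
  rw [Matrix.det_smul, Matrix.det_one, mul_one]
  exact pow_ne_zero _ Polynomial.X_ne_zero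

theorem Pdet_ne : (Pmat V).det ≠ 0 := by
  rw [Pmat, Matrix.det_fromBlocks_zero₂₁]
  exact mul_ne_zero smul_one_det_ne detNS_ne

lemma charpoly_eq_of_conj {n : Type*} [Fintype n] [DecidableEq n]
    (M1 M2 P : Matrix n n ℝ[X]) (h : M1 * P = P * M2) (hd : P.det ≠ 0) :
    M1.charpoly = M2.charpoly := by
  have hmap : (M1.map C) * (P.map C) = (P.map C) * (M2.map C) := by
    rw [← Matrix.map_mul, ← Matrix.map_mul, h]
  have hcm : Matrix.charmatrix M1 * P.map C = P.map C * Matrix.charmatrix M2 := by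
    rw [charmatrix_eq, charmatrix_eq, Matrix.sub_mul, Matrix.mul_sub,
      Matrix.smul_mul, Matrix.one_mul, Matrix.mul_smul, Matrix.mul_one, hmap]
  have hdet := congrArg Matrix.det hcm
  rw [Matrix.det_mul, Matrix.det_mul] at hdet
  have hPC : (P.map ⇑(C : ℝ[X] →+* (ℝ[X])[X])).det ≠ 0 := by
    rw [← RingHom.mapMatrix_apply, ← RingHom.map_det]
    exact fun hc => hd (by simpa using hc)
  rw [Matrix.charpoly, Matrix.charpoly]
  apply mul_right_cancel₀ hPC
  rw [hdet, mul_comm]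

theorem main (S : SimpleGraph V) (r : V) :
    psi (coalescence S r T1) = psi (coalescence S r T2) := by
  classical
  have hd1 := decompGen S r T1 az1 (toV dL1) (toV chiL1)
    hadj1 hroot1 hdeg1 hchisum1 hZc1 hchi0.1
  have hd2 := decompGen S r T2 az2 (toV dL2) (toV chiL2)
    hadj2 hroot2 hdeg2 hchisum2 hZc2 hchi0.2
  have hconj :
      Matrix.fromBlocks (Bs S r) (er r * RS1) (CS1 * erT r) WS1 * Pmat V
        = Pmat V * Matrix.fromBlocks (Bs S r) (er r * RS2) (CS2 * erT r) WS2 := by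
    rw [Pmat, Matrix.fromBlocks_multiply, Matrix.fromBlocks_multiply]
    have b11 : Bs S r * ((X : ℝ[X]) • (1 : Matrix V V ℝ[X])) = ((X : ℝ[X]) • (1 : Matrix V V ℝ[X])) * Bs S r := by
      rw [Matrix.mul_smul, Matrix.smul_mul, Matrix.mul_one, Matrix.one_mul]
    have b12 : (er r * RS1) * NS = ((X : ℝ[X]) • (1 : Matrix V V ℝ[X])) * (er r * RS2) := by
      rw [Matrix.mul_assoc, keyRowS, Matrix.smul_mul, Matrix.one_mul, Matrix.mul_smul]
    have b21 : (CS1 * erT r) * ((X : ℝ[X]) • (1 : Matrix V V ℝ[X])) = NS * (CS2 * erT r) := by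
      rw [← Matrix.mul_assoc, keyColS, Matrix.mul_smul, Matrix.mul_one,
        Matrix.smul_mul]
    have b22 : WS1 * NS = NS * WS2 := keyNS.symm
    simp only [Matrix.mul_zero, Matrix.zero_mul, add_zero, zero_add, b11, b12, b21, b22]
  simp only [psi]
  rw [hd1, hd2]
  exact charpoly_eq_of_conj _ _ (Pmat V) hconj Pdet_ne

end finalsec

end PsiAux

/-- For any graph `S` with at least two vertices and any vertex `r` of `S`, the
coalescences `S • T₁` and `S • T₂` have the same generalized characteristic
polynomial `ψ`. -/
theorem psi_coalescence_eq {V : Type*} [Fintype V] [DecidableEq V]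
    (S : SimpleGraph V) (hS : 2 ≤ Fintype.card V) (r : V) :
    psi (coalescence S r T1) = psi (coalescence S r T2) :=
  PsiAux.main S r
end

section
/- Let X be a finite simple graph and let V(X) = C₁ ∪ C₂ ∪ ⋯ ∪ C_k ∪ C be a partition of its vertex set; put c := |C| and cᵢ := |Cᵢ|. Suppose that (a) for all 1 ≤ i,j ≤ k there is a number d_{ij} such that every vertex of Cᵢ has exactly d_{ij} neighbors in C_j; (b) every vertex of C has exactly cᵢ/2 neighbors in Cᵢ, for each i; and (c) every vertex of Cᵢ has exactly c/2 neighbors in C, for each i. Let X^π be the graph on V(X) in which a vertex v ∈ C and a vertex w ∈ Cᵢ (1 ≤ i ≤ k) are adjacent iff they are not adjacent in X, and all other pairs of vertices are adjacent iff they are adjacent in X. Then X and X^π are degree similar. -/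
open Matrix

/-- The graph obtained from `X` by local switching with respect to the special part `C0`:
a pair with exactly one endpoint in `C0` is adjacent iff it was NOT adjacent in `X`,
and every other pair is adjacent iff it was adjacent in `X`. -/
def switched {V : Type*} (X : SimpleGraph V) (C0 : Set V) : SimpleGraph V :=
  SimpleGraph.fromRel fun a b =>
    (((a ∈ C0 ∧ b ∉ C0) ∨ (a ∉ C0 ∧ b ∈ C0)) ∧ ¬ X.Adj a b) ∨
    (¬ ((a ∈ C0 ∧ b ∉ C0) ∨ (a ∉ C0 ∧ b ∈ C0)) ∧ X.Adj a b)

open Classical in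
private lemma indsum_nat {V : Type*} [Fintype V] (s : Set V) :
    ∑ w : V, (if w ∈ s then 1 else 0) = s.ncard := by
  rw [Set.ncard_eq_toFinset_card']
  rw [show s.toFinset = Finset.univ.filter (fun w => w ∈ s) by ext w; simp]
  rw [Finset.card_filter]

open Classical in
private lemma indsum_real {V : Type*} [Fintype V] (s : Set V) :
    ∑ w : V, (if w ∈ s then (1:ℝ) else 0) = (s.ncard : ℝ) := by
  rw [← indsum_nat s, Nat.cast_sum]
  exact Finset.sum_congr rfl fun w _ => by split_ifs <;> simp


/-- Local switching (Lemma 9 of the paper): if `V(X) = C₁ ∪ ⋯ ∪ C_k ∪ C` is a partition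
such that (a) every vertex of `Cᵢ` has exactly `dij i j` neighbours in `C j`,
(b) every vertex of `C` has exactly `|Cᵢ|/2` neighbours in `Cᵢ` and
(c) every vertex of `Cᵢ` has exactly `|C|/2` neighbours in `C`,
then `X` and the switched graph `X^π` are degree similar. -/
theorem localSwitching_degreeSimilar {V : Type*} [Fintype V] [DecidableEq V]
    (X : SimpleGraph V) (k : ℕ) (C : Fin k → Set V) (C0 : Set V)
    (hcover : ∀ x : V, x ∈ C0 ∨ ∃ i, x ∈ C i)
    (hdisj : ∀ i j, i ≠ j → Disjoint (C i) (C j))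
    (hdisj0 : ∀ i, Disjoint (C i) C0)
    (dij : Fin k → Fin k → ℕ)
    (ha : ∀ i j, ∀ x ∈ C i, (C j ∩ X.neighborSet x).ncard = dij i j)
    (hb : ∀ x ∈ C0, ∀ i, 2 * (C i ∩ X.neighborSet x).ncard = (C i).ncard)
    (hc : ∀ i, ∀ x ∈ C i, 2 * (C0 ∩ X.neighborSet x).ncard = C0.ncard) :
    DegreeSimilar X (switched X C0) := by
  classical
  set Y := switched X C0 with hYdef
  -- basic partition facts
  have huniq : ∀ {i j : Fin k} {u : V}, u ∈ C i → u ∈ C j → i = j := by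
    intro i j u hi hj
    by_contra hne
    exact Set.disjoint_left.mp (hdisj i j hne) hi hj
  have hnot0 : ∀ {i : Fin k} {u : V}, u ∈ C i → u ∉ C0 := fun {i u} hi =>
    Set.disjoint_left.mp (hdisj0 i) hi
  -- adjacency of the switched graph
  have hadjY : ∀ a b : V, Y.Adj a b ↔ a ≠ b ∧
      ((((a ∈ C0 ∧ b ∉ C0) ∨ (a ∉ C0 ∧ b ∈ C0)) ∧ ¬ X.Adj a b) ∨
       (¬ ((a ∈ C0 ∧ b ∉ C0) ∨ (a ∉ C0 ∧ b ∈ C0)) ∧ X.Adj a b)) := by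
    intro a b
    rw [hYdef, switched, SimpleGraph.fromRel_adj]
    have hxs : X.Adj b a ↔ X.Adj a b := X.adj_comm b a
    constructor
    · rintro ⟨h1, h2⟩; exact ⟨h1, by tauto⟩
    · rintro ⟨h1, h2⟩; exact ⟨h1, by tauto⟩
  have hY_cross : ∀ {a b : V}, ¬(a ∈ C0 ↔ b ∈ C0) → (Y.Adj a b ↔ ¬ X.Adj a b) := by
    intro a b hcr
    have hne : a ≠ b := by intro h; subst h; exact hcr Iff.rfl
    rw [hadjY]; tauto
  have hY_same : ∀ {a b : V}, (a ∈ C0 ↔ b ∈ C0) → (Y.Adj a b ↔ X.Adj a b) := by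
    intro a b hiff
    rw [hadjY]
    constructor
    · rintro ⟨hne, h | h⟩
      · exact absurd h.1 (by tauto)
      · exact h.2
    · intro h; exact ⟨X.ne_of_adj h, Or.inr ⟨by tauto, h⟩⟩
  -- neighbourhood identities for Y
  have hset1 : ∀ v ∈ C0, ∀ i, C i ∩ Y.neighborSet v = C i \ X.neighborSet v := by
    intro v hv i; ext w
    simp only [Set.mem_inter_iff, Set.mem_diff, SimpleGraph.mem_neighborSet]
    have : ∀ hw : w ∈ C i, ¬(v ∈ C0 ↔ w ∈ C0) := fun hw h => (hnot0 hw) (h.mp hv)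
    constructor
    · rintro ⟨hw, hadj⟩; exact ⟨hw, (hY_cross (this hw)).mp hadj⟩
    · rintro ⟨hw, hnadj⟩; exact ⟨hw, (hY_cross (this hw)).mpr hnadj⟩
  have hset2 : ∀ v ∈ C0, C0 ∩ Y.neighborSet v = C0 ∩ X.neighborSet v := by
    intro v hv; ext w
    simp only [Set.mem_inter_iff, SimpleGraph.mem_neighborSet]
    constructor
    · rintro ⟨hw, hadj⟩; exact ⟨hw, (hY_same (iff_of_true hv hw)).mp hadj⟩
    · rintro ⟨hw, hadj⟩; exact ⟨hw, (hY_same (iff_of_true hv hw)).mpr hadj⟩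
  have hset3 : ∀ (i : Fin k) (v : V), v ∈ C i → C0 ∩ Y.neighborSet v = C0 \ X.neighborSet v := by
    intro i v hv; ext w
    simp only [Set.mem_inter_iff, Set.mem_diff, SimpleGraph.mem_neighborSet]
    have : ∀ hw : w ∈ C0, ¬(v ∈ C0 ↔ w ∈ C0) := fun hw h => (hnot0 hv) (h.mpr hw)
    constructor
    · rintro ⟨hw, hadj⟩; exact ⟨hw, (hY_cross (this hw)).mp hadj⟩
    · rintro ⟨hw, hnadj⟩; exact ⟨hw, (hY_cross (this hw)).mpr hnadj⟩
  have hset4 : ∀ (i j : Fin k) (v : V), v ∈ C i →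
      C j ∩ Y.neighborSet v = C j ∩ X.neighborSet v := by
    intro i j v hv; ext w
    simp only [Set.mem_inter_iff, SimpleGraph.mem_neighborSet]
    constructor
    · rintro ⟨hw, hadj⟩; exact ⟨hw, (hY_same (iff_of_false (hnot0 hv) (hnot0 hw))).mp hadj⟩
    · rintro ⟨hw, hadj⟩; exact ⟨hw, (hY_same (iff_of_false (hnot0 hv) (hnot0 hw))).mpr hadj⟩
  -- partition counting
  have hone : ∀ w : V, ((if w ∈ C0 then 1 else 0) + ∑ i, if w ∈ C i then 1 else 0) = 1 := by
    intro w
    rcases hcover w with h0 | ⟨i, hi⟩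
    · have hni : ∀ i, w ∉ C i := fun i hi => hnot0 hi h0
      simp [h0, hni]
    · have h0 : w ∉ C0 := hnot0 hi
      have hsum : ∑ j, (if w ∈ C j then 1 else 0) = 1 := by
        rw [Finset.sum_eq_single i]
        · simp [hi]
        · intro j _ hij
          have : w ∉ C j := fun hj => hij (huniq hj hi)
          simp [this]
        · simp [hi]
      simp [h0, hsum]
  have hpart : ∀ S : Set V, S.ncard = (C0 ∩ S).ncard + ∑ i, (C i ∩ S).ncard := by
    intro S
    have e1 : ∀ T : Set V, (T ∩ S).ncard
        = ∑ w : V, (if w ∈ S then (if w ∈ T then 1 else 0) else 0) := by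
      intro T
      rw [← indsum_nat (T ∩ S)]
      refine Finset.sum_congr rfl fun w _ => ?_
      by_cases h1 : w ∈ S <;> by_cases h2 : w ∈ T <;>
        simp [h1, h2, Set.mem_inter_iff]
    calc S.ncard = ∑ w : V, (if w ∈ S then 1 else 0) := (indsum_nat S).symm
      _ = ∑ w : V, ((if w ∈ S then (if w ∈ C0 then 1 else 0) else 0)
            + ∑ i, (if w ∈ S then (if w ∈ C i then 1 else 0) else 0)) := by
          refine Finset.sum_congr rfl fun w _ => ?_
          by_cases h : w ∈ S
          · simp only [if_pos h]; exact (hone w).symm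
          · simp [h]
      _ = (C0 ∩ S).ncard + ∑ i, (C i ∩ S).ncard := by
          rw [Finset.sum_add_distrib, Finset.sum_comm, ← e1]
          congr 1
          exact Finset.sum_congr rfl fun i _ => (e1 (C i)).symm
  -- double counting edges between classes
  have hdouble : ∀ i j, (C i).ncard * dij i j = (C j).ncard * dij j i := by
    have key : ∀ i j, (C i).ncard * dij i j
        = ∑ x : V, ∑ y : V, (if x ∈ C i ∧ y ∈ C j ∧ X.Adj x y then 1 else 0) := by
      intro i j
      calc (C i).ncard * dij i j = ∑ x : V, (if x ∈ C i then dij i j else 0) := by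
            rw [← indsum_nat (C i), Finset.sum_mul]
            exact Finset.sum_congr rfl fun x _ => by by_cases h : x ∈ C i <;> simp [h]
        _ = ∑ x : V, ∑ y : V, (if x ∈ C i ∧ y ∈ C j ∧ X.Adj x y then 1 else 0) := by
            refine Finset.sum_congr rfl fun x _ => ?_
            by_cases hx : x ∈ C i
            · rw [if_pos hx, ← ha i j x hx, ← indsum_nat (C j ∩ X.neighborSet x)]
              refine Finset.sum_congr rfl fun y _ => ?_
              by_cases h1 : y ∈ C j <;> by_cases h2 : X.Adj x y <;>
                simp [hx, h1, h2, Set.mem_inter_iff, SimpleGraph.mem_neighborSet]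
            · simp [hx]
    intro i j
    rw [key i j, key j i, Finset.sum_comm]
    refine Finset.sum_congr rfl fun a _ => Finset.sum_congr rfl fun b _ =>
      if_congr ?_ rfl rfl
    constructor
    · rintro ⟨h1, h2, h3⟩; exact ⟨h2, h1, h3.symm⟩
    · rintro ⟨h1, h2, h3⟩; exact ⟨h2, h1, h3.symm⟩
  -- degrees
  have hgdeg : ∀ (G : SimpleGraph V) (v : V), gdeg G v = (G.neighborSet v).ncard := by
    intro G v; rw [gdeg, Nat.card_coe_set_eq]
  have hsplit : ∀ (G : SimpleGraph V) (v : V), (G.neighborSet v).ncard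
      = (C0 ∩ G.neighborSet v).ncard + ∑ i, (C i ∩ G.neighborSet v).ncard :=
    fun G v => hpart _
  have hdeg_eq : ∀ v, gdeg Y v = gdeg X v := by
    intro v
    rw [hgdeg Y v, hgdeg X v]
    rcases hcover v with hv0 | ⟨i, hvi⟩
    · have hterm : ∀ i, 2 * (C i ∩ Y.neighborSet v).ncard
          = 2 * (C i ∩ X.neighborSet v).ncard := by
        intro i
        rw [hset1 v hv0 i]
        have hh := Set.ncard_inter_add_ncard_diff_eq_ncard (C i) (X.neighborSet v)
          (Set.toFinite _)
        have hbb := hb v hv0 i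
        omega
      have e1 : 2 * (Y.neighborSet v).ncard = 2 * (X.neighborSet v).ncard := by
        rw [hsplit Y v, hsplit X v, hset2 v hv0, mul_add, mul_add, Finset.mul_sum,
          Finset.mul_sum]
        rw [Finset.sum_congr rfl fun i _ => hterm i]
      omega
    · have e1 : 2 * (Y.neighborSet v).ncard = 2 * (X.neighborSet v).ncard := by
        rw [hsplit Y v, hsplit X v, hset3 i v hvi, mul_add, mul_add]
        have hh := Set.ncard_inter_add_ncard_diff_eq_ncard C0 (X.neighborSet v)
          (Set.toFinite _)
        have hcc := hc i v hvi
        have e2 : ∑ j, (C j ∩ Y.neighborSet v).ncard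
            = ∑ j, (C j ∩ X.neighborSet v).ncard :=
          Finset.sum_congr rfl fun j _ => by rw [hset4 i j v hvi]
        rw [e2]
        omega
      omega
  have hDY : degMat Y = degMat X := by
    have hf : (fun v => ((gdeg Y v : ℝ))) = fun v => ((gdeg X v : ℝ)) :=
      funext fun v => by rw [hdeg_eq v]
    rw [degMat, degMat, hf]
  have hconst : ∀ i, ∀ u ∈ C i, ∀ v ∈ C i, gdeg X u = gdeg X v := by
    intro i u hu v hv
    have e : ∀ w ∈ C i, 2 * gdeg X w = C0.ncard + ∑ j, 2 * dij i j := by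
      intro w hw
      rw [hgdeg, hsplit X w, mul_add, hc i w hw, Finset.mul_sum]
      congr 1
      exact Finset.sum_congr rfl fun j _ => by rw [ha i j w hw]
    have e1 := e u hu
    have e2 := e v hv
    omega
  -- adjacency matrix entries
  have hAX : ∀ a b : V, adjMat X a b = if X.Adj a b then (1:ℝ) else 0 := fun a b => rfl
  have hAY' : ∀ a b : V, adjMat Y a b = if Y.Adj a b then (1:ℝ) else 0 := fun a b => rfl
  have hAY_cross : ∀ a b : V, ¬(a ∈ C0 ↔ b ∈ C0) →
      adjMat Y a b = 1 - adjMat X a b := by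
    intro a b h
    rw [hAX, hAY']
    by_cases hx : X.Adj a b
    · rw [if_pos hx, if_neg (fun hy => (hY_cross h).mp hy hx)]; norm_num
    · rw [if_neg hx, if_pos ((hY_cross h).mpr hx)]; norm_num
  have hAY_same : ∀ a b : V, (a ∈ C0 ↔ b ∈ C0) → adjMat Y a b = adjMat X a b := by
    intro a b h
    rw [hAX, hAY']
    by_cases hx : X.Adj a b
    · rw [if_pos hx, if_pos ((hY_same h).mpr hx)]
    · rw [if_neg hx, if_neg (fun hy => hx ((hY_same h).mp hy))]
  have hadjsum : ∀ (G : SimpleGraph V) (s : Set V) (x : V),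
      ∑ w : V, (if w ∈ s then (if G.Adj x w then (1:ℝ) else 0) else 0)
        = ((s ∩ G.neighborSet x).ncard : ℝ) := by
    intro G s x
    rw [← indsum_real (s ∩ G.neighborSet x)]
    refine Finset.sum_congr rfl fun w _ => ?_
    by_cases h1 : w ∈ s <;> by_cases h2 : G.Adj x w <;>
      simp [h1, h2, Set.mem_inter_iff, SimpleGraph.mem_neighborSet]
  -- the switching matrix
  set M : Matrix V V ℝ := Matrix.of (fun u v =>
    if h : ∃ i, u ∈ C i ∧ v ∈ C i then
      2 / ((C h.choose).ncard : ℝ) - (if u = v then 1 else 0)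
    else (if u = v then 1 else 0)) with hMdef
  have hcne : ∀ {i : Fin k} {u : V}, u ∈ C i → ((C i).ncard : ℝ) ≠ 0 := by
    intro i u hu
    have h1 : 0 < (C i).ncard := (Set.ncard_pos (Set.toFinite _)).mpr ⟨u, hu⟩
    exact_mod_cast h1.ne'
  have hM_notsame : ∀ u v : V, (¬ ∃ i, u ∈ C i ∧ v ∈ C i) →
      M u v = if u = v then 1 else 0 := by
    intro u v h
    rw [hMdef]
    simp only [Matrix.of_apply, dif_neg h]
  have hM_row : ∀ (i : Fin k) (u : V), u ∈ C i → ∀ w : V,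
      M u w = (if w ∈ C i then 2 / ((C i).ncard : ℝ) else 0)
        - (if u = w then 1 else 0) := by
    intro i u hu w
    by_cases hw : w ∈ C i
    · have hex : ∃ j, u ∈ C j ∧ w ∈ C j := ⟨i, hu, hw⟩
      rw [hMdef]
      simp only [Matrix.of_apply, dif_pos hex]
      rw [huniq hex.choose_spec.1 hu, if_pos hw]
    · have hnex : ¬ ∃ j, u ∈ C j ∧ w ∈ C j := by
        rintro ⟨j, hu', hw'⟩
        exact hw ((huniq hu' hu) ▸ hw')
      have hne : u ≠ w := fun h => hw (h ▸ hu)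
      rw [hMdef]
      simp only [Matrix.of_apply, dif_neg hnex]
      rw [if_neg hw, if_neg hne]
      ring
  have hM_row0 : ∀ u : V, u ∈ C0 → ∀ w : V, M u w = if u = w then (1:ℝ) else 0 :=
    fun u hu w => hM_notsame u w (by rintro ⟨j, hu', _⟩; exact hnot0 hu' hu)
  have hM_col : ∀ (i : Fin k) (v : V), v ∈ C i → ∀ w : V,
      M w v = (if w ∈ C i then 2 / ((C i).ncard : ℝ) else 0)
        - (if w = v then 1 else 0) := by
    intro i v hv w
    by_cases hw : w ∈ C i
    · have hex : ∃ j, w ∈ C j ∧ v ∈ C j := ⟨i, hw, hv⟩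
      rw [hMdef]
      simp only [Matrix.of_apply, dif_pos hex]
      rw [huniq hex.choose_spec.2 hv, if_pos hw]
    · have hnex : ¬ ∃ j, w ∈ C j ∧ v ∈ C j := by
        rintro ⟨j, hw', hv'⟩
        exact hw ((huniq hv' hv) ▸ hw')
      have hne : w ≠ v := fun h => hw (h ▸ hv)
      rw [hMdef]
      simp only [Matrix.of_apply, dif_neg hnex]
      rw [if_neg hw, if_neg hne]
      ring
  have hM_col0 : ∀ v : V, v ∈ C0 → ∀ w : V, M w v = if w = v then (1:ℝ) else 0 :=
    fun v hv w => hM_notsame w v (by rintro ⟨j, _, hv'⟩; exact hnot0 hv' hv)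
  have hcolsum : ∀ (i : Fin k) (v : V),
      ∑ w : V, (if w ∈ C i then M w v else 0) = if v ∈ C i then 1 else 0 := by
    intro i v
    by_cases hv : v ∈ C i
    · rw [if_pos hv]
      have hstep : ∀ w : V, (if w ∈ C i then M w v else 0)
          = (if w ∈ C i then 2 / ((C i).ncard : ℝ) else 0)
            - (if w ∈ C i then (if w = v then (1:ℝ) else 0) else 0) := by
        intro w
        by_cases hw : w ∈ C i
        · rw [if_pos hw, if_pos hw, if_pos hw, hM_col i v hv w, if_pos hw]
        · simp [hw]
      rw [Finset.sum_congr rfl fun w _ => hstep w, Finset.sum_sub_distrib]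
      have e1 : ∑ w : V, (if w ∈ C i then 2 / ((C i).ncard : ℝ) else 0)
          = ((C i).ncard : ℝ) * (2 / ((C i).ncard : ℝ)) := by
        rw [← indsum_real (C i), Finset.sum_mul]
        exact Finset.sum_congr rfl fun w _ => by by_cases h : w ∈ C i <;> simp [h]
      have e2 : ∑ w : V, (if w ∈ C i then (if w = v then (1:ℝ) else 0) else 0) = 1 := by
        rw [Finset.sum_eq_single v]
        · simp [hv]
        · intro w _ hwv; simp [hwv]
        · simp
      have e3 : ((C i).ncard : ℝ) * (2 / ((C i).ncard : ℝ)) = 2 := by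
        have hcc := hcne hv
        field_simp
      rw [e1, e2, e3]
      norm_num
    · rw [if_neg hv]
      refine Finset.sum_eq_zero fun w _ => ?_
      by_cases hw : w ∈ C i
      · rw [if_pos hw]
        have hnex : ¬ ∃ j, w ∈ C j ∧ v ∈ C j := by
          rintro ⟨j, hw', hv'⟩
          exact hv ((huniq hw' hw) ▸ hv')
        rw [hM_notsame w v hnex, if_neg (fun h : w = v => hv (h ▸ hw))]
      · rw [if_neg hw]
  have hMM : M * M = 1 := by
    ext u v
    rw [Matrix.mul_apply, Matrix.one_apply]
    rcases hcover u with hu0 | ⟨i, hui⟩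
    · have hstep : ∀ w : V, M u w * M w v = (if u = w then M w v else 0) := by
        intro w
        rw [hM_row0 u hu0 w]
        by_cases h : u = w <;> simp [h]
      rw [Finset.sum_congr rfl fun w _ => hstep w, Finset.sum_ite_eq]
      simp only [Finset.mem_univ, if_true]
      rw [hM_row0 u hu0 v]
    · have hstep : ∀ w : V, M u w * M w v
          = (if w ∈ C i then (2 / ((C i).ncard : ℝ)) * M w v else 0)
            - (if u = w then M w v else 0) := by
        intro w
        rw [hM_row i u hui w, sub_mul]
        congr 1
        · by_cases h : w ∈ C i <;> simp [h]
        · by_cases h : u = w <;> simp [h]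
      rw [Finset.sum_congr rfl fun w _ => hstep w, Finset.sum_sub_distrib]
      have e1 : ∑ w : V, (if w ∈ C i then (2 / ((C i).ncard : ℝ)) * M w v else 0)
          = (2 / ((C i).ncard : ℝ)) * (if v ∈ C i then 1 else 0) := by
        rw [← hcolsum i v, Finset.mul_sum]
        exact Finset.sum_congr rfl fun w _ => by by_cases h : w ∈ C i <;> simp [h]
      have e2 : ∑ w : V, (if u = w then M w v else 0) = M u v := by
        rw [Finset.sum_ite_eq]; simp
      rw [e1, e2]
      by_cases hv : v ∈ C i
      · rw [if_pos hv, hM_row i u hui v, if_pos hv]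
        ring
      · rw [if_neg hv]
        have hnex : ¬ ∃ j, u ∈ C j ∧ v ∈ C j := by
          rintro ⟨j, hu', hv'⟩
          exact hv ((huniq hu' hui) ▸ hv')
        rw [hM_notsame u v hnex]
        have hne : u ≠ v := fun h => hv (h ▸ hui)
        rw [if_neg hne]
        ring
  have hAM : adjMat X * M = M * adjMat Y := by
    ext u v
    rw [Matrix.mul_apply, Matrix.mul_apply]
    have hL0 : v ∈ C0 → ∑ w : V, adjMat X u w * M w v = adjMat X u v := by
      intro hv0
      have hstep : ∀ w : V, adjMat X u w * M w v
          = (if w = v then adjMat X u w else 0) := by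
        intro w
        rw [hM_col0 v hv0 w]
        by_cases h : w = v <;> simp [h]
      rw [Finset.sum_congr rfl fun w _ => hstep w, Finset.sum_ite_eq']
      simp
    have hLj : ∀ j : Fin k, v ∈ C j → ∑ w : V, adjMat X u w * M w v
        = (2 / ((C j).ncard : ℝ)) * ((C j ∩ X.neighborSet u).ncard : ℝ)
          - adjMat X u v := by
      intro j hvj
      have hstep : ∀ w : V, adjMat X u w * M w v
          = (if w ∈ C j then (2 / ((C j).ncard : ℝ)) * adjMat X u w else 0)
            - (if w = v then adjMat X u w else 0) := by
        intro w
        rw [hM_col j v hvj w, mul_sub]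
        congr 1
        · by_cases h : w ∈ C j <;> simp [h, mul_comm]
        · by_cases h : w = v <;> simp [h]
      rw [Finset.sum_congr rfl fun w _ => hstep w, Finset.sum_sub_distrib]
      congr 1
      · rw [← hadjsum X (C j) u, Finset.mul_sum]
        refine Finset.sum_congr rfl fun w _ => ?_
        by_cases h : w ∈ C j
        · rw [if_pos h, if_pos h, hAX]
        · simp [h]
      · rw [Finset.sum_ite_eq']; simp
    have hR0 : u ∈ C0 → ∑ w : V, M u w * adjMat Y w v = adjMat Y u v := by
      intro hu0
      have hstep : ∀ w : V, M u w * adjMat Y w v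
          = (if u = w then adjMat Y w v else 0) := by
        intro w
        rw [hM_row0 u hu0 w]
        by_cases h : u = w <;> simp [h]
      rw [Finset.sum_congr rfl fun w _ => hstep w, Finset.sum_ite_eq]
      simp
    have hRi : ∀ i : Fin k, u ∈ C i → ∑ w : V, M u w * adjMat Y w v
        = (2 / ((C i).ncard : ℝ)) * ((C i ∩ Y.neighborSet v).ncard : ℝ)
          - adjMat Y u v := by
      intro i hui
      have hstep : ∀ w : V, M u w * adjMat Y w v
          = (if w ∈ C i then (2 / ((C i).ncard : ℝ)) * adjMat Y w v else 0)
            - (if u = w then adjMat Y w v else 0) := by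
        intro w
        rw [hM_row i u hui w, sub_mul]
        congr 1
        · by_cases h : w ∈ C i <;> simp [h]
        · by_cases h : u = w <;> simp [h]
      rw [Finset.sum_congr rfl fun w _ => hstep w, Finset.sum_sub_distrib]
      congr 1
      · rw [← hadjsum Y (C i) v, Finset.mul_sum]
        refine Finset.sum_congr rfl fun w _ => ?_
        by_cases h : w ∈ C i
        · rw [if_pos h, if_pos h, hAY']
          exact congrArg _ (if_congr (Y.adj_comm w v) rfl rfl)
        · simp [h]
      · rw [Finset.sum_ite_eq]; simp
    rcases hcover u with hu0 | ⟨i, hui⟩ <;> rcases hcover v with hv0 | ⟨j, hvj⟩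
    · rw [hL0 hv0, hR0 hu0, hAY_same u v (iff_of_true hu0 hv0)]
    · rw [hLj j hvj, hR0 hu0, hAY_cross u v (by simp [hu0, hnot0 hvj])]
      have hbb : 2 * ((C j ∩ X.neighborSet u).ncard : ℝ) = ((C j).ncard : ℝ) := by
        exact_mod_cast congrArg Nat.cast (hb u hu0 j)
      have hcj := hcne hvj
      have h4 : (2 / ((C j).ncard : ℝ)) * ((C j ∩ X.neighborSet u).ncard : ℝ) = 1 := by
        rw [div_mul_eq_mul_div, div_eq_one_iff_eq hcj]
        linarith
      rw [h4]
    · rw [hL0 hv0, hRi i hui, hset1 v hv0 i, hAY_cross u v (by simp [hnot0 hui, hv0])]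
      have h1 := Set.ncard_inter_add_ncard_diff_eq_ncard (C i) (X.neighborSet v)
        (Set.toFinite _)
      have h2 := hb v hv0 i
      have h3 : 2 * ((C i \ X.neighborSet v).ncard : ℝ) = ((C i).ncard : ℝ) := by
        exact_mod_cast congrArg Nat.cast
          (show 2 * (C i \ X.neighborSet v).ncard = (C i).ncard by omega)
      have hci := hcne hui
      have h4 : (2 / ((C i).ncard : ℝ)) * ((C i \ X.neighborSet v).ncard : ℝ) = 1 := by
        rw [div_mul_eq_mul_div, div_eq_one_iff_eq hci]
        linarith
      rw [h4]
      ring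
    · rw [hLj j hvj, hRi i hui, hset4 j i v hvj,
        hAY_same u v (iff_of_false (hnot0 hui) (hnot0 hvj))]
      have e1 : ((C j ∩ X.neighborSet u).ncard : ℝ) = (dij i j : ℝ) := by
        exact_mod_cast congrArg Nat.cast (ha i j u hui)
      have e2 : ((C i ∩ X.neighborSet v).ncard : ℝ) = (dij j i : ℝ) := by
        exact_mod_cast congrArg Nat.cast (ha j i v hvj)
      rw [e1, e2]
      have hd : ((C i).ncard : ℝ) * (dij i j : ℝ) = ((C j).ncard : ℝ) * (dij j i : ℝ) := by
        exact_mod_cast congrArg Nat.cast (hdouble i j)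
      have hci := hcne hui
      have hcj := hcne hvj
      have h5 : (2 / ((C j).ncard : ℝ)) * (dij i j : ℝ)
          = (2 / ((C i).ncard : ℝ)) * (dij j i : ℝ) := by
        rw [div_mul_eq_mul_div, div_mul_eq_mul_div, div_eq_div_iff hcj hci]
        linear_combination (2:ℝ) * hd
      rw [h5]
  have hDM : degMat X * M = M * degMat X := by
    ext u v
    rw [degMat, Matrix.diagonal_mul, Matrix.mul_diagonal]
    by_cases h : ∃ i, u ∈ C i ∧ v ∈ C i
    · obtain ⟨i, hu, hv⟩ := h
      rw [hconst i u hu v hv, mul_comm]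
    · rw [hM_notsame u v h]
      by_cases huv : u = v
      · subst huv; rw [mul_comm]
      · simp [huv]
  have hMinvertible : Invertible M := invertibleOfRightInverse M M hMM
  have hMunit : IsUnit M := isUnit_of_invertible M
  have hMinv : M⁻¹ = M := Matrix.inv_eq_right_inv hMM
  refine ⟨Equiv.refl V, M, hMunit, ?_, ?_⟩
  · rw [Equiv.coe_refl, Matrix.submatrix_id_id, hMinv, mul_assoc, hAM,
      ← mul_assoc, hMM, one_mul]
  · rw [Equiv.coe_refl, Matrix.submatrix_id_id, hMinv, hDY, mul_assoc, hDM,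
      ← mul_assoc, hMM, one_mul]
end

section
/- Let X₁ and X₂ be degree-similar finite simple graphs on n vertices, and let Y₁ and Y₂ be degree-similar finite simple graphs on m vertices. Then the Cartesian products X₁ □ Y₁ and X₂ □ Y₂ are degree similar. -/
open Matrix

/-- The Cartesian product of graphs. -/
def cartProd {V W : Type*} (G : SimpleGraph V) (H : SimpleGraph W) :
    SimpleGraph (V × W) :=
  SimpleGraph.fromRel fun a b =>
    (a.1 = b.1 ∧ H.Adj a.2 b.2) ∨ (a.2 = b.2 ∧ G.Adj a.1 b.1)

/-- The tensor product of graphs. -/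
def tensorProd {V W : Type*} (G : SimpleGraph V) (H : SimpleGraph W) :
    SimpleGraph (V × W) :=
  SimpleGraph.fromRel fun a b => G.Adj a.1 b.1 ∧ H.Adj a.2 b.2

/-- The strong product of graphs. -/
def strongProd {V W : Type*} (G : SimpleGraph V) (H : SimpleGraph W) :
    SimpleGraph (V × W) :=
  SimpleGraph.fromRel fun a b =>
    (a.1 = b.1 ∧ H.Adj a.2 b.2) ∨ (a.2 = b.2 ∧ G.Adj a.1 b.1) ∨
      (G.Adj a.1 b.1 ∧ H.Adj a.2 b.2)

/-- The lexicographic product of graphs. -/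
def lexProd {V W : Type*} (G : SimpleGraph V) (H : SimpleGraph W) :
    SimpleGraph (V × W) :=
  SimpleGraph.fromRel fun a b =>
    G.Adj a.1 b.1 ∨ (a.1 = b.1 ∧ H.Adj a.2 b.2)

open Kronecker

lemma cartProd_adj {V W : Type*} (G : SimpleGraph V) (H : SimpleGraph W)
    (u u' : V) (v v' : W) :
    (cartProd G H).Adj (u,v) (u',v') ↔ (u = u' ∧ H.Adj v v') ∨ (v = v' ∧ G.Adj u u') := by
  simp only [cartProd, SimpleGraph.fromRel_adj, ne_eq, Prod.mk.injEq, not_and]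
  constructor
  · rintro ⟨hne, (⟨h1,h2⟩|⟨h1,h2⟩)|(⟨h1,h2⟩|⟨h1,h2⟩)⟩
    · exact Or.inl ⟨h1, h2⟩
    · exact Or.inr ⟨h1, h2⟩
    · exact Or.inl ⟨h1.symm, H.adj_symm h2⟩
    · exact Or.inr ⟨h1.symm, G.adj_symm h2⟩
  · rintro (⟨rfl, h⟩|⟨rfl, h⟩)
    · exact ⟨fun _ => H.ne_of_adj h, Or.inl (Or.inl ⟨rfl, h⟩)⟩
    · exact ⟨fun h' => absurd h' (G.ne_of_adj h), Or.inl (Or.inr ⟨rfl, h⟩)⟩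

lemma adjMat_cartProd {V W : Type*} [DecidableEq V] [DecidableEq W]
    (G : SimpleGraph V) (H : SimpleGraph W) :
    adjMat (cartProd G H) = adjMat G ⊗ₖ (1 : Matrix W W ℝ) + (1 : Matrix V V ℝ) ⊗ₖ adjMat H := by
  ext ⟨u,v⟩ ⟨u',v'⟩
  simp only [adjMat, Matrix.add_apply, Matrix.kroneckerMap_apply, Matrix.one_apply,
    Matrix.of_apply, cartProd_adj]
  classical
  rw [if_congr (cartProd_adj G H u u' v v') rfl rfl]
  by_cases huu : u = u' <;> by_cases hvv : v = v' <;>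
    simp [huu, hvv, G.irrefl, H.irrefl]

lemma neighborSet_cartProd {V W : Type*} (G : SimpleGraph V) (H : SimpleGraph W) (u : V) (v : W) :
    (cartProd G H).neighborSet (u,v) =
      (fun w => (w, v)) '' G.neighborSet u ∪ (fun w => (u, w)) '' H.neighborSet v := by
  ext ⟨a,b⟩
  simp only [SimpleGraph.mem_neighborSet, cartProd_adj, Set.mem_union, Set.mem_image,
    Prod.mk.injEq]
  constructor
  · rintro (⟨rfl, h⟩|⟨rfl, h⟩)
    · exact Or.inr ⟨b, h, rfl, rfl⟩
    · exact Or.inl ⟨a, h, rfl, rfl⟩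
  · rintro (⟨w, hw, rfl, rfl⟩|⟨w, hw, rfl, rfl⟩)
    · exact Or.inr ⟨rfl, hw⟩
    · exact Or.inl ⟨rfl, hw⟩

lemma gdeg_cartProd {V W : Type*} [Fintype V] [Fintype W]
    (G : SimpleGraph V) (H : SimpleGraph W) (u : V) (v : W) :
    gdeg (cartProd G H) (u,v) = gdeg G u + gdeg H v := by
  have hdisj : Disjoint ((fun w => (w, v)) '' G.neighborSet u)
      ((fun w => (u, w)) '' H.neighborSet v) := by
    rw [Set.disjoint_left]
    rintro ⟨a,b⟩ ⟨w, hw, rfl, rfl⟩ ⟨w', hw', h1, h2⟩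
    exact G.ne_of_adj hw (by simpa using h1.symm)
  have hi1 : Function.Injective (fun w : V => (w, v)) := fun a b h => congrArg Prod.fst h
  have hi2 : Function.Injective (fun w : W => (u, w)) := fun a b h => congrArg Prod.snd h
  simp only [gdeg, Nat.card_coe_set_eq, neighborSet_cartProd]
  rw [Set.ncard_union_eq hdisj (Set.toFinite _) (Set.toFinite _),
    Set.ncard_image_of_injective _ hi1, Set.ncard_image_of_injective _ hi2]

lemma degMat_cartProd {V W : Type*} [Fintype V] [Fintype W] [DecidableEq V] [DecidableEq W]
    (G : SimpleGraph V) (H : SimpleGraph W) :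
    degMat (cartProd G H) = degMat G ⊗ₖ (1 : Matrix W W ℝ) + (1 : Matrix V V ℝ) ⊗ₖ degMat H := by
  rw [degMat, degMat, degMat, ← Matrix.diagonal_one, ← Matrix.diagonal_one,
    Matrix.diagonal_kronecker_diagonal, Matrix.diagonal_kronecker_diagonal,
    Matrix.diagonal_add]
  apply congrArg Matrix.diagonal
  funext ⟨u, v⟩
  rw [gdeg_cartProd]
  push_cast
  ring

theorem degreeSimilar_cartProd' {V W : Type*} [Fintype V] [Fintype W]
    [DecidableEq V] [DecidableEq W]
    (X₁ X₂ : SimpleGraph V) (Y₁ Y₂ : SimpleGraph W)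
    (hX : ∃ (e : V ≃ V) (M : Matrix V V ℝ), IsUnit M ∧
      M⁻¹ * adjMat X₁ * M = (adjMat X₂).submatrix ⇑e ⇑e ∧
      M⁻¹ * degMat X₁ * M = (degMat X₂).submatrix ⇑e ⇑e)
    (hY : ∃ (f : W ≃ W) (N : Matrix W W ℝ), IsUnit N ∧
      N⁻¹ * adjMat Y₁ * N = (adjMat Y₂).submatrix ⇑f ⇑f ∧
      N⁻¹ * degMat Y₁ * N = (degMat Y₂).submatrix ⇑f ⇑f) :
    ∃ (g : V × W ≃ V × W) (P : Matrix (V × W) (V × W) ℝ), IsUnit P ∧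
      P⁻¹ * adjMat (cartProd X₁ Y₁) * P = (adjMat (cartProd X₂ Y₂)).submatrix ⇑g ⇑g ∧
      P⁻¹ * degMat (cartProd X₁ Y₁) * P = (degMat (cartProd X₂ Y₂)).submatrix ⇑g ⇑g := by
  obtain ⟨e, M, hM, hMA, hMD⟩ := hX
  obtain ⟨f, N, hN, hNA, hND⟩ := hY
  have hMdet : IsUnit M.det := (Matrix.isUnit_iff_isUnit_det M).mp hM
  have hNdet : IsUnit N.det := (Matrix.isUnit_iff_isUnit_det N).mp hN
  have hMM : M⁻¹ * M = 1 := Matrix.nonsing_inv_mul M hMdet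
  have hNN : N⁻¹ * N = 1 := Matrix.nonsing_inv_mul N hNdet
  refine ⟨Equiv.prodCongr e f, M ⊗ₖ N, ?_, ?_, ?_⟩
  · have h1 : (M ⊗ₖ N) * (M⁻¹ ⊗ₖ N⁻¹) = 1 := by
      rw [← Matrix.mul_kronecker_mul, Matrix.mul_nonsing_inv M hMdet,
        Matrix.mul_nonsing_inv N hNdet, Matrix.one_kronecker_one]
    have h2 : (M⁻¹ ⊗ₖ N⁻¹) * (M ⊗ₖ N) = 1 := by
      rw [← Matrix.mul_kronecker_mul, hMM, hNN, Matrix.one_kronecker_one]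
    exact ⟨⟨_, _, h1, h2⟩, rfl⟩
  all_goals
    rw [Matrix.inv_kronecker]
    first
    | (rw [adjMat_cartProd, adjMat_cartProd]
       have hA := hMA; have hB := hNA)
    | (rw [degMat_cartProd, degMat_cartProd]
       have hA := hMD; have hB := hND)
    rw [mul_add, add_mul, ← Matrix.mul_kronecker_mul, ← Matrix.mul_kronecker_mul,
      ← Matrix.mul_kronecker_mul, ← Matrix.mul_kronecker_mul]
    simp only [Matrix.mul_one]
    rw [hNN, hMM, hA, hB]
    ext ⟨a, b⟩ ⟨c, d⟩
    simp [Matrix.one_apply, Matrix.submatrix_apply, Equiv.prodCongr_apply, Prod.ext_iff,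
      EmbeddingLike.apply_eq_iff_eq]


/-- Degree-similar factors give degree-similar Cartesian products. -/
theorem degreeSimilar_cartProd {V W : Type*} [Fintype V] [Fintype W]
    [DecidableEq V] [DecidableEq W]
    (X₁ X₂ : SimpleGraph V) (Y₁ Y₂ : SimpleGraph W)
    (hX : DegreeSimilar X₁ X₂) (hY : DegreeSimilar Y₁ Y₂)  :
    DegreeSimilar (cartProd X₁ Y₁) (cartProd X₂ Y₂) :=
  degreeSimilar_cartProd' X₁ X₂ Y₁ Y₂ hX hY
end

section
/- Let X₁ and X₂ be degree-similar finite simple graphs on n vertices, and let Y₁ and Y₂ be degree-similar finite simple graphs on m vertices. Then the tensor products X₁ ⊗ Y₁ and X₂ ⊗ Y₂ are degree similar. -/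
open Matrix

open Kronecker in
lemma adjMat_tensorProd {V W : Type*} (G : SimpleGraph V) (H : SimpleGraph W) :
    adjMat (tensorProd G H) = adjMat G ⊗ₖ adjMat H := by
  ext ⟨a, b⟩ ⟨c, d⟩
  have hadj : (tensorProd G H).Adj (a, b) (c, d) ↔ G.Adj a c ∧ H.Adj b d := by
    simp only [tensorProd, SimpleGraph.fromRel_adj]
    constructor
    · rintro ⟨-, h | h⟩
      · exact h
      · exact ⟨h.1.symm, h.2.symm⟩
    · rintro ⟨h1, h2⟩
      exact ⟨by rintro ⟨⟩; exact G.irrefl h1, Or.inl ⟨h1, h2⟩⟩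
  simp only [adjMat, kroneckerMap_apply, Matrix.of_apply]
  by_cases h1 : G.Adj a c <;> by_cases h2 : H.Adj b d <;> simp [hadj, h1, h2]

lemma gdeg_tensorProd {V W : Type*} [Fintype V] [Fintype W]
    (G : SimpleGraph V) (H : SimpleGraph W) (a : V) (b : W) :
    gdeg (tensorProd G H) (a, b) = gdeg G a * gdeg H b := by
  have hset : (tensorProd G H).neighborSet (a, b) =
      (G.neighborSet a) ×ˢ (H.neighborSet b) := by
    ext ⟨c, d⟩
    simp only [SimpleGraph.mem_neighborSet, Set.mem_prod, tensorProd,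
      SimpleGraph.fromRel_adj]
    constructor
    · rintro ⟨-, h | h⟩
      · exact h
      · exact ⟨h.1.symm, h.2.symm⟩
    · rintro ⟨h1, h2⟩
      exact ⟨by rintro ⟨⟩; exact G.irrefl h1, Or.inl ⟨h1, h2⟩⟩
  rw [gdeg, gdeg, gdeg, hset, Nat.card_congr (Equiv.Set.prod _ _), Nat.card_prod]

open Kronecker in
lemma degMat_tensorProd {V W : Type*} [Fintype V] [Fintype W]
    [DecidableEq V] [DecidableEq W] (G : SimpleGraph V) (H : SimpleGraph W) :
    degMat (tensorProd G H) = degMat G ⊗ₖ degMat H := by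
  rw [degMat, degMat, degMat, Matrix.diagonal_kronecker_diagonal]
  have : (fun v : V × W => ((gdeg (tensorProd G H) v : ℝ))) =
      fun mn => (gdeg G mn.1 : ℝ) * (gdeg H mn.2 : ℝ) := by
    funext mn
    obtain ⟨a, b⟩ := mn
    rw [gdeg_tensorProd]
    push_cast
    rfl
  rw [this]

open Kronecker in
lemma kronecker_submatrix {l m l' m' n p n' p' : Type*}
    (A : Matrix l m ℝ) (B : Matrix l' m' ℝ)
    (f : n → l) (g : p → m) (f' : n' → l') (g' : p' → m') :
    (A.submatrix f g) ⊗ₖ (B.submatrix f' g') =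
      (A ⊗ₖ B).submatrix (Prod.map f f') (Prod.map g g') := by
  ext ⟨a, b⟩ ⟨c, d⟩
  rfl

/-- Degree-similar factors give degree-similar tensor products. -/
theorem degreeSimilar_tensorProd {V W : Type*} [Fintype V] [Fintype W]
    [DecidableEq V] [DecidableEq W]
    (X₁ X₂ : SimpleGraph V) (Y₁ Y₂ : SimpleGraph W)
    (hX : DegreeSimilar X₁ X₂) (hY : DegreeSimilar Y₁ Y₂)  :
    DegreeSimilar (tensorProd X₁ Y₁) (tensorProd X₂ Y₂) := by
  obtain ⟨e₁, M₁, hM₁, hA₁, hD₁⟩ := hX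
  obtain ⟨e₂, M₂, hM₂, hA₂, hD₂⟩ := hY
  refine ⟨e₁.prodCongr e₂, Matrix.kroneckerMap (· * ·) M₁ M₂, ?_, ?_, ?_⟩
  · rw [Matrix.isUnit_iff_isUnit_det, Matrix.det_kronecker]
    exact (((Matrix.isUnit_iff_isUnit_det _).mp hM₁).pow _).mul
      (((Matrix.isUnit_iff_isUnit_det _).mp hM₂).pow _)
  · rw [adjMat_tensorProd, adjMat_tensorProd, Matrix.inv_kronecker,
      ← Matrix.mul_kronecker_mul, ← Matrix.mul_kronecker_mul, hA₁, hA₂,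
      kronecker_submatrix]
    rfl
  · rw [degMat_tensorProd, degMat_tensorProd, Matrix.inv_kronecker,
      ← Matrix.mul_kronecker_mul, ← Matrix.mul_kronecker_mul, hD₁, hD₂,
      kronecker_submatrix]
    rfl
end
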